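/- arXiv:1611.10299 — 4 statements merged into one kernel-verified Lean document; each statement's English description precedes it below -/
import Mathlib

section
/- Let G = (V, E) be a finite simple graph containing two non-adjacent vertices u and v with N(u) ∩ N(v) = ∅ and {u, v} ∪ N(u) ∪ N(v) ≠ V. Then the 2-colouring φ of E that colours every edge incident to u or to v red and all other edges blue does not satisfy φ → Π₂; in particular G does not satisfy G → Π₂. -/
open MeasureTheory Filter Topology SimpleGraph

namespace MonochromaticTrees

variable {V : Type*} {C : Type*}

/-- A subgraph `T` of `G` is a *monochromatic tree* with respect to the
edge-colouring `φ` if it is either empty or a tree, and all of its edges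
receive the same colour under `φ`. -/
def IsMonoTree (G : SimpleGraph V) (φ : Sym2 V → C) (T : G.Subgraph) : Prop :=
  (T.verts = ∅ ∨ T.coe.IsTree) ∧ ∃ c : C, ∀ e ∈ T.edgeSet, φ e = c

/-- `φ → Π₂`: the vertex set can be partitioned into the vertex sets of two
monochromatic trees. -/
def MonoTreePartition2 (G : SimpleGraph V) (φ : Sym2 V → Bool) : Prop :=
  ∃ T₁ T₂ : G.Subgraph, IsMonoTree G φ T₁ ∧ IsMonoTree G φ T₂ ∧
    Disjoint T₁.verts T₂.verts ∧ T₁.verts ∪ T₂.verts = Set.univ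

/-- `G → Π₂`: every 2-colouring of the edges admits a partition of the vertex
set into the vertex sets of two monochromatic trees. -/
def ArrowPi2 (G : SimpleGraph V) : Prop :=
  ∀ φ : Sym2 V → Bool, MonoTreePartition2 G φ

/-- Partition of the vertex set into the vertex sets of `r` monochromatic
trees for an `r`-colouring `φ`. -/
def MonoTreePartitionR (G : SimpleGraph V) (r : ℕ) (φ : Sym2 V → Fin r) : Prop :=
  ∃ T : Fin r → G.Subgraph, (∀ i, IsMonoTree G φ (T i)) ∧
    (Set.univ.PairwiseDisjoint fun i => (T i).verts) ∧ (⋃ i, (T i).verts) = Set.univ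

/-- `G → Π_r`. -/
def ArrowPiR (G : SimpleGraph V) (r : ℕ) : Prop :=
  ∀ φ : Sym2 V → Fin r, MonoTreePartitionR G r φ

/-- There is a monochromatic `u`–`v` path. -/
def MonoPath (G : SimpleGraph V) (φ : Sym2 V → C) (u v : V) : Prop :=
  ∃ w : G.Walk u v, w.IsPath ∧ ∃ c : C, ∀ e ∈ w.edges, φ e = c

/-- The spanning subgraph of `G` consisting of the edges of colour `c`. -/
def colourGraph (G : SimpleGraph V) (φ : Sym2 V → Bool) (c : Bool) : SimpleGraph V :=
  SimpleGraph.fromEdgeSet {e | e ∈ G.edgeSet ∧ φ e = c}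

/-- The set `R^φ` (for `c = true`, i.e. red) resp. `B^φ` (for `c = false`,
i.e. blue) of vertices `v` with `d_c(v) > d(v)/3`. -/
def bigColourSet (G : SimpleGraph V) (φ : Sym2 V → Bool) (c : Bool) : Set V :=
  {v | (G.neighborSet v).ncard < 3 * ((colourGraph G φ c).neighborSet v).ncard}

/-- A colouring is extremal if there are distinct `r ∈ R^φ`, `b ∈ B^φ` with no
monochromatic `r`–`b` path. -/
def Extremal (G : SimpleGraph V) (φ : Sym2 V → Bool) : Prop :=
  ∃ r ∈ bigColourSet G φ true, ∃ b ∈ bigColourSet G φ false,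
    r ≠ b ∧ ¬ MonoPath G φ r b

/-- The number of edges of `G` with one endpoint in `U` and the other in `W`. -/
noncomputable def edgesBetween (G : SimpleGraph V) (U W : Set V) : ℕ :=
  {e ∈ G.edgeSet | ∃ u ∈ U, ∃ w ∈ W, e = s(u, w)}.ncard

/-- The number of edges of `G` with both endpoints in `A`. -/
noncomputable def edgesWithin (G : SimpleGraph V) (A : Set V) : ℕ :=
  {e ∈ G.edgeSet | ∀ v ∈ e, v ∈ A}.ncard

/-- The distribution of the binomial random graph `G(n,p)`: each potential
edge appears independently with probability `p`. -/
noncomputable def gnp (n : ℕ) (p : ℝ) : Measure (Sym2 (Fin n) → Bool) :=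
  Measure.pi fun _ => (PMF.bernoulli (min (Real.toNNReal p) 1) (min_le_right _ _)).toMeasure

/-- The graph encoded by an outcome `ω` of the edge indicators. -/
def graphOf {n : ℕ} (ω : Sym2 (Fin n) → Bool) : SimpleGraph (Fin n) :=
  SimpleGraph.fromEdgeSet {e | ω e = true}


lemma key {V : Type*} (G : SimpleGraph V) (u v : V)
    (hadj : ¬ G.Adj u v)
    (hN : G.neighborSet u ∩ G.neighborSet v = ∅)
    (φ : Sym2 V → Bool)
    (hred : ∀ e ∈ G.edgeSet, (u ∈ e ∨ v ∈ e) → φ e = true)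
    (hblue : ∀ e ∈ G.edgeSet, ¬ (u ∈ e ∨ v ∈ e) → φ e = false)
    (T : G.Subgraph) (hT : IsMonoTree G φ T) (hu : u ∈ T.verts) :
    T.verts ⊆ {u} ∪ G.neighborSet u := by
  classical
  intro x hx
  by_contra hxn
  have hxu : x ≠ u := fun h => hxn (Or.inl h)
  have hxadj : ¬ G.Adj u x := fun h => hxn (Or.inr h)
  obtain ⟨htree, c, hc⟩ := hT
  have htree : T.coe.IsTree := by
    rcases htree with h | h
    · exact absurd hu (by simp [h])
    · exact h
  obtain ⟨w⟩ := htree.isConnected.preconnected ⟨u, hu⟩ ⟨x, hx⟩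
  have hp := w.toPath.2
  set p := w.toPath.1 with hpdef
  clear_value p
  clear hpdef w
  -- case on the shape of the path
  cases p with
  | nil => exact hxu rfl
  | cons h q =>
    rename_i a
    have hadj1 : G.Adj u a.val := h.adj_sub
    cases q with
    | nil => exact hxadj hadj1
    | cons h' q' =>
      rename_i b
      have hadj2 : G.Adj a.val b.val := h'.adj_sub
      -- the first edge is red, so c = true
      have he1 : s(u, a.val) ∈ T.edgeSet := h
      have hctrue : c = true := by
        rw [← hc _ he1]
        exact hred _ (T.edgeSet_subset he1) (Or.inl (by simp))
      -- the second edge is red, hence incident to u or v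
      have he2 : s(a.val, b.val) ∈ T.edgeSet := h'
      have hinc : u ∈ s(a.val, b.val) ∨ v ∈ s(a.val, b.val) := by
        by_contra hni
        have := hblue _ (T.edgeSet_subset he2) hni
        rw [hc _ he2, hctrue] at this
        simp at this
      have hub : (⟨u, hu⟩ : T.verts) ∉ (SimpleGraph.Walk.cons h' q').support := by
        rw [SimpleGraph.Walk.cons_isPath_iff] at hp
        exact hp.2
      rcases hinc with hinc | hinc
      · rw [Sym2.mem_iff] at hinc
        rcases hinc with h1 | h1
        · exact G.irrefl (h1 ▸ hadj1)
        · exact hub (by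
            have : (⟨u, hu⟩ : T.verts) = b := Subtype.ext h1
            rw [this]
            simp [SimpleGraph.Walk.support_cons])
      · rw [Sym2.mem_iff] at hinc
        rcases hinc with h1 | h1
        · exact hadj (h1 ▸ hadj1)
        · have : a.val ∈ G.neighborSet u ∩ G.neighborSet v := by
            refine ⟨hadj1, ?_⟩
            rw [SimpleGraph.mem_neighborSet, h1]
            exact hadj2.symm
          rw [hN] at this
          exact this

/-- If `u`, `v` are non-adjacent vertices with disjoint
neighbourhoods and `{u,v} ∪ N(u) ∪ N(v) ≠ V`, then the colouring giving every
edge incident to `u` or `v` the colour red (`true`) and every other edge the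
colour blue (`false`) does not satisfy `φ → Π₂`; in particular `G ↛ Π₂`. -/
theorem stmt_1 {V : Type*} [Fintype V] (G : SimpleGraph V) (u v : V)
    (huv : u ≠ v) (hadj : ¬ G.Adj u v)
    (hN : G.neighborSet u ∩ G.neighborSet v = ∅)
    (hV : ({u, v} : Set V) ∪ G.neighborSet u ∪ G.neighborSet v ≠ Set.univ)
    (φ : Sym2 V → Bool)
    (hred : ∀ e ∈ G.edgeSet, (u ∈ e ∨ v ∈ e) → φ e = true)
    (hblue : ∀ e ∈ G.edgeSet, ¬ (u ∈ e ∨ v ∈ e) → φ e = false) :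
    ¬ MonoTreePartition2 G φ ∧ ¬ ArrowPi2 G := by
  -- symmetric versions of the hypotheses
  have hadj' : ¬ G.Adj v u := fun h => hadj h.symm
  have hN' : G.neighborSet v ∩ G.neighborSet u = ∅ := by
    rw [Set.inter_comm]; exact hN
  have hred' : ∀ e ∈ G.edgeSet, (v ∈ e ∨ u ∈ e) → φ e = true :=
    fun e he h => hred e he (Or.symm h)
  have hblue' : ∀ e ∈ G.edgeSet, ¬ (v ∈ e ∨ u ∈ e) → φ e = false :=
    fun e he h => hblue e he (fun h' => h (Or.symm h'))
  have main : ¬ MonoTreePartition2 G φ := by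
    rintro ⟨T₁, T₂, h1, h2, hdisj, hcover⟩
    -- pick a vertex outside {u,v} ∪ N(u) ∪ N(v)
    obtain ⟨x, hxn⟩ : ∃ x, x ∉ ({u, v} : Set V) ∪ G.neighborSet u ∪ G.neighborSet v := by
      by_contra hco
      push_neg at hco
      exact hV (Set.eq_univ_of_forall hco)
    have hxu : x ∉ ({u} : Set V) ∪ G.neighborSet u := by
      rintro (h | h)
      · exact hxn (Or.inl (Or.inl (Or.inl h)))
      · exact hxn (Or.inl (Or.inr h))
    have hxv : x ∉ ({v} : Set V) ∪ G.neighborSet v := by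
      rintro (h | h)
      · exact hxn (Or.inl (Or.inl (Or.inr h)))
      · exact hxn (Or.inr h)
    have hvu : v ∉ ({u} : Set V) ∪ G.neighborSet u := by
      rintro (h | h)
      · exact huv h.symm
      · exact hadj h
    have huv' : u ∉ ({v} : Set V) ∪ G.neighborSet v := by
      rintro (h | h)
      · exact huv h
      · exact hadj h.symm
    have hmemx : x ∈ T₁.verts ∪ T₂.verts := hcover ▸ Set.mem_univ x
    have hmemu : u ∈ T₁.verts ∪ T₂.verts := hcover ▸ Set.mem_univ u
    have hmemv : v ∈ T₁.verts ∪ T₂.verts := hcover ▸ Set.mem_univ v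
    have K1u := key G u v hadj hN φ hred hblue T₁ h1
    have K2u := key G u v hadj hN φ hred hblue T₂ h2
    have K1v := key G v u hadj' hN' φ hred' hblue' T₁ h1
    have K2v := key G v u hadj' hN' φ hred' hblue' T₂ h2
    rcases hmemx with hx | hx
    · have hu2 : u ∈ T₂.verts := by
        rcases hmemu with h | h
        · exact absurd (K1u h hx) hxu
        · exact h
      have hv2 : v ∈ T₂.verts := by
        rcases hmemv with h | h
        · exact absurd (K1v h hx) hxv
        · exact h
      exact hvu (K2u hu2 hv2)
    · have hu1 : u ∈ T₁.verts := by
        rcases hmemu with h | h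
        · exact h
        · exact absurd (K2u h hx) hxu
      have hv1 : v ∈ T₁.verts := by
        rcases hmemv with h | h
        · exact h
        · exact absurd (K2v h hx) hxv
      exact hvu (K1u hu1 hv1)
  exact ⟨main, fun h => main (h φ)⟩

end MonochromaticTrees
end

section
/- If p = p(n) ≫ ((log n)/n)^{1/2}, then asymptotically almost surely G ∈ G(n,p) satisfies: for every vertex v ∈ V(G) and all disjoint subsets U ⊆ V(G) and W ⊆ N_G(v) with |U| ≥ 100/p and |W| ≥ pn/100, the number e_G(U,W) of edges of G with one endpoint in U and the other in W satisfies e_G(U,W) > p|U||W|/2. -/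
open MeasureTheory Filter Topology SimpleGraph

namespace MonochromaticTrees

variable {V : Type*} {C : Type*}

open Finset
open scoped ENNReal NNReal

noncomputable def qq (p : ℝ) : ℝ≥0∞ := min (ENNReal.ofReal p) 1

noncomputable def wgt (p : ℝ) (b : Bool) : ℝ≥0∞ := cond b (qq p) (1 - qq p)

lemma measurableSet_pi_bool {α : Type*} [Fintype α] (s : Set (α → Bool)) : MeasurableSet s :=
  (Set.toFinite s).measurableSet

lemma gnp_singleton {n : ℕ} (p : ℝ) (ω : Sym2 (Fin n) → Bool) :
    gnp n p {ω} = ∏ e : Sym2 (Fin n), wgt p (ω e) := by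
  rw [← Set.univ_pi_singleton ω, gnp, Measure.pi_pi]
  refine Finset.prod_congr rfl fun e _ => ?_
  rw [PMF.toMeasure_apply_singleton _ _ (measurableSet_singleton _), PMF.bernoulli_apply]
  have hc : ((min (Real.toNNReal p) 1 : ℝ≥0) : ℝ≥0∞) = qq p := by rw [ENNReal.coe_min]; rfl
  cases ω e
  · simp only [cond_false, wgt, ← hc]
    rw [ENNReal.coe_sub, ENNReal.coe_one]
  · simp only [cond_true, wgt, ← hc]

lemma gnp_finset {n : ℕ} (p : ℝ) (F : Finset (Sym2 (Fin n) → Bool)) :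
    gnp n p ↑F = ∑ ω ∈ F, ∏ e : Sym2 (Fin n), wgt p (ω e) := by
  have h : (↑F : Set (Sym2 (Fin n) → Bool)) = ⋃ ω ∈ F, {ω} := by
    ext x; simp
  rw [h, measure_biUnion_finset ?_ fun _ _ => measurableSet_pi_bool _]
  · exact Finset.sum_congr rfl fun ω _ => gnp_singleton p ω
  · intro x _ y _ hxy
    simp only [Function.onFun, Set.disjoint_singleton_left, Set.mem_singleton_iff]
    exact hxy

lemma gnp_set {n : ℕ} (p : ℝ) (E : Set (Sym2 (Fin n) → Bool)) :
    gnp n p E = ∑ ω ∈ (Set.toFinite E).toFinset, ∏ e : Sym2 (Fin n), wgt p (ω e) := by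
  conv_lhs => rw [← Set.Finite.coe_toFinset (Set.toFinite E)]
  exact gnp_finset p _


lemma gnp_event_le {n : ℕ} {p : ℝ} (hp0 : 0 ≤ p) (hp1 : p ≤ 1) (S T : Finset (Sym2 (Fin n)))
    (hST : Disjoint S T) {a : ℝ} :
    gnp n p {ω | (∀ e ∈ T, ω e = true) ∧ (((S.filter fun e => ω e = true).card : ℝ) ≤ a)}
      ≤ ENNReal.ofReal ((2:ℝ) ^ a * p ^ T.card * (1 - p/2) ^ S.card) := by
  classical
  set q : ℝ≥0∞ := qq p with hq
  have hq1 : q ≤ 1 := min_le_right _ _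
  have hqp : q = ENNReal.ofReal p := min_eq_left (ENNReal.ofReal_le_one.mpr hp1)
  set E := {ω : Sym2 (Fin n) → Bool |
      (∀ e ∈ T, ω e = true) ∧ (((S.filter fun e => ω e = true).card : ℝ) ≤ a)} with hE
  set h : Sym2 (Fin n) → Bool → ℝ≥0∞ := fun e b =>
    if e ∈ T then cond b q 0 else if e ∈ S then cond b (q/2) (1 - q) else wgt p b with hh
  have key : ∀ ω ∈ E, ∏ e : Sym2 (Fin n), wgt p (ω e)
      ≤ ENNReal.ofReal ((2:ℝ) ^ a) * ∏ e : Sym2 (Fin n), h e (ω e) := by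
    intro ω hω
    obtain ⟨hω1, hω2⟩ := hω
    have hsplit : ∏ e : Sym2 (Fin n), wgt p (ω e)
        = (∏ e : Sym2 (Fin n), (if e ∈ S ∧ ω e = true then (2:ℝ≥0∞) else 1))
          * ∏ e : Sym2 (Fin n), h e (ω e) := by
      rw [← Finset.prod_mul_distrib]
      refine Finset.prod_congr rfl fun e _ => ?_
      by_cases heT : e ∈ T
      · have he1 : ω e = true := hω1 e heT
        have heS : e ∉ S := Finset.disjoint_right.mp hST heT
        simp [hh, wgt, heT, heS, he1, hq]
      · by_cases heS : e ∈ S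
        · cases hb : ω e
          · simp [hh, wgt, heT, heS, hb, hq]
          · have : (2:ℝ≥0∞) * (q / 2) = q :=
              ENNReal.mul_div_cancel' (by norm_num) (by norm_num)
            simp only [hh, wgt, heT, heS, hb, if_false, if_true, and_true, cond_true]
            rw [this]
        · simp [hh, heT, heS]
    rw [hsplit]
    refine mul_le_mul_left ?_ _
    have hcard : (∏ e : Sym2 (Fin n), (if e ∈ S ∧ ω e = true then (2:ℝ≥0∞) else 1))
        = 2 ^ (S.filter fun e => ω e = true).card := by
      rw [← Finset.prod_filter]
      rw [show Finset.univ.filter (fun e => e ∈ S ∧ ω e = true)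
            = S.filter (fun e => ω e = true) from by ext e; simp [Finset.mem_filter]]
      exact Finset.prod_const 2
    rw [hcard]
    calc (2:ℝ≥0∞) ^ (S.filter fun e => ω e = true).card
        = (2:ℝ≥0∞) ^ (((S.filter fun e => ω e = true).card : ℕ) : ℝ) :=
          (ENNReal.rpow_natCast 2 _).symm
      _ ≤ (2:ℝ≥0∞) ^ a := ENNReal.rpow_le_rpow_of_exponent_le one_le_two hω2
      _ = ENNReal.ofReal ((2:ℝ) ^ a) := by
          rw [show (2:ℝ≥0∞) = ENNReal.ofReal 2 from by norm_num,
            ENNReal.ofReal_rpow_of_pos (by norm_num)]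
  calc gnp n p E = ∑ ω ∈ (Set.toFinite E).toFinset, ∏ e : Sym2 (Fin n), wgt p (ω e) :=
        gnp_set p E
    _ ≤ ∑ ω ∈ (Set.toFinite E).toFinset,
          ENNReal.ofReal ((2:ℝ) ^ a) * ∏ e : Sym2 (Fin n), h e (ω e) :=
        Finset.sum_le_sum fun ω hω => key ω ((Set.Finite.mem_toFinset _).mp hω)
    _ = ENNReal.ofReal ((2:ℝ) ^ a) * ∑ ω ∈ (Set.toFinite E).toFinset,
          ∏ e : Sym2 (Fin n), h e (ω e) := by rw [Finset.mul_sum]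
    _ ≤ ENNReal.ofReal ((2:ℝ) ^ a) * ∑ ω : Sym2 (Fin n) → Bool,
          ∏ e : Sym2 (Fin n), h e (ω e) :=
        mul_le_mul_right (Finset.sum_le_sum_of_subset (Finset.subset_univ _)) _
    _ = ENNReal.ofReal ((2:ℝ) ^ a) * ∏ e : Sym2 (Fin n), (h e true + h e false) := by
        rw [← Fintype.prod_sum h]
        congr 1
        exact Finset.prod_congr rfl fun e _ => by rw [Fintype.sum_bool]
    _ = ENNReal.ofReal ((2:ℝ) ^ a) * ((q/2 + (1 - q)) ^ S.card * q ^ T.card) := by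
        congr 1
        rw [← Finset.prod_subset (Finset.subset_univ (S ∪ T)) (fun e _ he => ?_),
          Finset.prod_union hST]
        · congr 1
          · rw [Finset.prod_congr rfl (fun e he => ?_), Finset.prod_const]
            have heT : e ∉ T := Finset.disjoint_left.mp hST he
            simp [hh, he, heT]
          · rw [Finset.prod_congr rfl (fun e he => ?_), Finset.prod_const]
            have heS : e ∉ S := Finset.disjoint_right.mp hST he
            simp [hh, he, heS]
        · simp only [Finset.mem_union, not_or] at he
          simp only [hh, he.1, he.2, if_false, wgt, cond_true, cond_false]
          exact add_tsub_cancel_of_le hq1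
    _ = ENNReal.ofReal ((2:ℝ) ^ a * p ^ T.card * (1 - p/2) ^ S.card) := by
        have hqs : q/2 + (1 - q) = ENNReal.ofReal (1 - p/2) := by
          rw [hqp, show (2:ℝ≥0∞) = ENNReal.ofReal 2 from by norm_num,
            ← ENNReal.ofReal_div_of_pos (by norm_num : (0:ℝ) < 2),
            ← ENNReal.ofReal_one, ← ENNReal.ofReal_sub _ hp0,
            ← ENNReal.ofReal_add (by positivity) (by linarith)]
          congr 1
          ring
        rw [hqs, hqp, ← ENNReal.ofReal_pow hp0, ← ENNReal.ofReal_pow (by linarith : (0:ℝ) ≤ 1 - p/2),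
          ← ENNReal.ofReal_mul (pow_nonneg (by linarith : (0:ℝ) ≤ 1 - p/2) _),
          ← ENNReal.ofReal_mul (by positivity)]
        congr 1
        ring


def pairEdges {n : ℕ} (U W : Finset (Fin n)) : Finset (Sym2 (Fin n)) :=
  (U ×ˢ W).image fun x => s(x.1, x.2)

def starEdges {n : ℕ} (v : Fin n) (W : Finset (Fin n)) : Finset (Sym2 (Fin n)) :=
  W.image fun w => s(v, w)

lemma card_pairEdges {n : ℕ} {U W : Finset (Fin n)} (h : Disjoint U W) :
    (pairEdges U W).card = U.card * W.card := by
  rw [pairEdges, Finset.card_image_of_injOn, Finset.card_product]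
  rintro ⟨u1, w1⟩ h1 ⟨u2, w2⟩ h2 he
  simp only [Finset.coe_product, Set.mem_prod, Finset.mem_coe] at h1 h2
  rcases Sym2.eq_iff.mp he with ⟨ha, hb⟩ | ⟨ha, hb⟩ <;> simp only at ha hb
  · exact Prod.ext ha hb
  · subst ha
    exact absurd h1.1 (Finset.disjoint_right.mp h h2.2)
lemma card_starEdges {n : ℕ} (v : Fin n) (W : Finset (Fin n)) :
    (starEdges v W).card = W.card := by
  rw [starEdges, Finset.card_image_of_injOn]
  rintro w1 _ w2 _ he
  rcases Sym2.eq_iff.mp he with ⟨_, hb⟩ | ⟨ha, hb⟩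
  · exact hb
  · rw [hb, ← ha]

lemma disjoint_pair_star {n : ℕ} {v : Fin n} {U W : Finset (Fin n)}
    (hvU : v ∉ U) (hvW : v ∉ W) : Disjoint (pairEdges U W) (starEdges v W) := by
  rw [Finset.disjoint_left]
  intro e he hs
  obtain ⟨⟨u, w⟩, hm, rfl⟩ := Finset.mem_image.mp he
  obtain ⟨hu, hw⟩ := Finset.mem_product.mp hm
  obtain ⟨w', hw', he'⟩ := Finset.mem_image.mp hs
  rcases Sym2.eq_iff.mp he' with ⟨ha, _⟩ | ⟨ha, _⟩
  · exact hvU (ha ▸ hu)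
  · exact hvW (ha ▸ hw)

noncomputable def tripleSet (p : ℝ) (n : ℕ) : Finset (Fin n × Finset (Fin n) × Finset (Fin n)) :=
  Finset.univ.filter fun t =>
    Disjoint t.2.1 t.2.2 ∧ t.1 ∉ t.2.1 ∧ t.1 ∉ t.2.2 ∧
      99 / p ≤ (t.2.1.card : ℝ) ∧ p * n / 100 ≤ (t.2.2.card : ℝ)

def badEvent {n : ℕ} (p : ℝ) (t : Fin n × Finset (Fin n) × Finset (Fin n)) :
    Set (Sym2 (Fin n) → Bool) :=
  {ω | (∀ e ∈ starEdges t.1 t.2.2, ω e = true) ∧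
    ((((pairEdges t.2.1 t.2.2).filter fun e => ω e = true).card : ℝ)
      ≤ p * (t.2.1.card + 1) * t.2.2.card / 2)}

lemma gnp_bad_le {n : ℕ} {p : ℝ} (hp0 : 0 < p) (hp1 : p ≤ 1) :
    gnp n p (⋃ t ∈ tripleSet p n, badEvent p t)
      ≤ ENNReal.ofReal (∑ t ∈ tripleSet p n,
          (2:ℝ) ^ (p * (t.2.1.card + 1) * t.2.2.card / 2) * p ^ t.2.2.card
            * (1 - p/2) ^ (t.2.1.card * t.2.2.card)) := by
  refine (measure_biUnion_finset_le _ _).trans ?_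
  have hnn : ∀ t ∈ tripleSet p n, (0:ℝ) ≤ (2:ℝ) ^ (p * (t.2.1.card + 1) * t.2.2.card / 2)
      * p ^ t.2.2.card * (1 - p/2) ^ (t.2.1.card * t.2.2.card) := by
    intro t _
    have h2 : (0:ℝ) ≤ 1 - p/2 := by linarith
    have h3 : (0:ℝ) ≤ (2:ℝ) ^ (p * (t.2.1.card + 1) * t.2.2.card / 2) :=
      Real.rpow_nonneg (by norm_num) _
    positivity
  rw [ENNReal.ofReal_sum_of_nonneg hnn]
  refine Finset.sum_le_sum fun t ht => ?_
  simp only [tripleSet, Finset.mem_filter, Finset.mem_univ, true_and] at ht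
  obtain ⟨hdisj, hvU, hvW, _, _⟩ := ht
  have := gnp_event_le (n := n) hp0.le hp1 (pairEdges t.2.1 t.2.2) (starEdges t.1 t.2.2)
    (disjoint_pair_star hvU hvW) (a := p * (t.2.1.card + 1) * t.2.2.card / 2)
  rw [card_pairEdges hdisj, card_starEdges] at this
  exact this


lemma bad_subset {n : ℕ} {p : ℝ} (hp0 : 0 < p) (hp1 : p ≤ 1) :
    {ω : Sym2 (Fin n) → Bool | ¬ ∀ v : Fin n, ∀ U W : Set (Fin n), Disjoint U W →
        W ⊆ (graphOf ω).neighborSet v →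
        100 / p ≤ (U.ncard : ℝ) → p * n / 100 ≤ (W.ncard : ℝ) →
        p * U.ncard * W.ncard / 2 < (edgesBetween (graphOf ω) U W : ℝ)}
      ⊆ ⋃ t ∈ tripleSet p n, badEvent p t := by
  classical
  intro ω hω
  simp only [Set.mem_setOf_eq] at hω
  push_neg at hω
  obtain ⟨v, U, W, hdisj, hWN, hUc, hWc, hcount⟩ := hω
  set Uf : Finset (Fin n) := (Set.toFinite U).toFinset \ {v} with hUf
  set Wf : Finset (Fin n) := (Set.toFinite W).toFinset with hWf
  have hWfW : (Wf : Set (Fin n)) = W := Set.Finite.coe_toFinset _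
  have hWcard : W.ncard = Wf.card := Set.ncard_eq_toFinset_card _ _
  have hUsub : (Uf : Set (Fin n)) ⊆ U := by
    intro x hx
    rw [Finset.mem_coe, hUf, Finset.mem_sdiff, Set.Finite.mem_toFinset] at hx
    exact hx.1
  have hUcard : (U.ncard : ℝ) ≤ (Uf.card : ℝ) + 1 := by
    have hsub : (Set.toFinite U).toFinset ⊆ Uf ∪ {v} := by
      intro x hx
      by_cases hxv : x = v
      · simp [hxv]
      · simp only [Finset.mem_union, hUf, Finset.mem_sdiff, Finset.mem_singleton]
        exact Or.inl ⟨hx, hxv⟩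
    have h1 : (Set.toFinite U).toFinset.card ≤ Uf.card + 1 :=
      (Finset.card_le_card hsub).trans
        ((Finset.card_union_le _ _).trans (by simp))
    have h2 : U.ncard = (Set.toFinite U).toFinset.card := Set.ncard_eq_toFinset_card _ _
    rw [h2]
    exact_mod_cast h1
  have hvW : v ∉ Wf := by
    intro hv
    have hvW' : v ∈ W := by
      rw [← hWfW]; exact hv
    exact (graphOf ω).irrefl (hWN hvW')
  have hdisjf : Disjoint Uf Wf := by
    rw [Finset.disjoint_left]
    intro x hx hxW
    have hxU : x ∈ U := hUsub hx
    have hxW' : x ∈ W := by rw [← hWfW]; exact hxW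
    exact (Set.disjoint_left.mp hdisj hxU) hxW'
  have hu99 : 99 / p ≤ (Uf.card : ℝ) := by
    have h1p : (1:ℝ) ≤ 1/p := by
      rw [le_div_iff₀ hp0]; linarith
    have hsplit : (100:ℝ)/p - 99/p = 1/p := by ring
    linarith
  have hmemT : (v, Uf, Wf) ∈ tripleSet p n := by
    simp only [tripleSet, Finset.mem_filter, Finset.mem_univ, true_and]
    refine ⟨hdisjf, by simp [hUf], hvW, hu99, ?_⟩
    rw [hWcard] at hWc
    exact hWc
  refine Set.mem_biUnion hmemT ⟨?_, ?_⟩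
  · intro e he
    obtain ⟨w, hw, rfl⟩ := Finset.mem_image.mp he
    have hwW : w ∈ W := by rw [← hWfW]; exact hw
    have hadj : (graphOf ω).Adj v w := hWN hwW
    rw [graphOf, SimpleGraph.fromEdgeSet_adj] at hadj
    exact hadj.1
  · have key : (((pairEdges Uf Wf).filter fun e => ω e = true)).card
        = edgesBetween (graphOf ω) ↑Uf ↑Wf := by
      rw [edgesBetween]
      rw [show {e ∈ (graphOf ω).edgeSet | ∃ u ∈ (↑Uf : Set (Fin n)), ∃ w ∈ (↑Wf : Set (Fin n)),
            e = s(u,w)} = (((pairEdges Uf Wf).filter fun e => ω e = true : Finset _) : Set _)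
          from ?_]
      · rw [Set.ncard_coe_finset]
      · ext e
        simp only [Set.mem_setOf_eq, Finset.coe_filter, Finset.mem_coe]
        constructor
        · rintro ⟨heE, u, hu, w, hw, rfl⟩
          rw [graphOf, SimpleGraph.edgeSet_fromEdgeSet] at heE
          refine ⟨Finset.mem_image.mpr ⟨(u, w), Finset.mem_product.mpr ⟨hu, hw⟩, rfl⟩, heE.1⟩
        · rintro ⟨hmem, htrue⟩
          obtain ⟨⟨u, w⟩, huw, rfl⟩ := Finset.mem_image.mp hmem
          obtain ⟨hu, hw⟩ := Finset.mem_product.mp huw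
          refine ⟨?_, u, hu, w, hw, rfl⟩
          rw [graphOf, SimpleGraph.edgeSet_fromEdgeSet]
          refine ⟨htrue, ?_⟩
          simp only [Set.mem_setOf_eq, Sym2.isDiag_iff_proj_eq]
          intro hdiag
          exact (Finset.disjoint_left.mp hdisjf hu) (hdiag ▸ hw)
    have mono : edgesBetween (graphOf ω) ↑Uf ↑Wf ≤ edgesBetween (graphOf ω) U W := by
      apply Set.ncard_le_ncard ?_ (Set.toFinite _)
      rintro e ⟨heE, u, hu, w, hw, rfl⟩
      exact ⟨heE, u, hUsub hu, w, by rw [← hWfW]; exact hw, rfl⟩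
    have hle : ((((pairEdges Uf Wf).filter fun e => ω e = true)).card : ℝ)
        ≤ p * U.ncard * W.ncard / 2 := by
      rw [key]
      calc (edgesBetween (graphOf ω) ↑Uf ↑Wf : ℝ) ≤ (edgesBetween (graphOf ω) U W : ℝ) := by
            exact_mod_cast mono
        _ ≤ p * U.ncard * W.ncard / 2 := hcount
    refine hle.trans ?_
    rw [hWcard] at *
    have hW0 : (0:ℝ) ≤ (Wf.card : ℝ) := Nat.cast_nonneg _
    have hU0 : (0:ℝ) ≤ (U.ncard : ℝ) := Nat.cast_nonneg _
    nlinarith [mul_nonneg hp0.le hW0]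


lemma sum_finset_card {n : ℕ} (f : ℕ → ℝ) :
    ∑ U : Finset (Fin n), f U.card = ∑ u ∈ Finset.range (n+1), (n.choose u : ℝ) * f u := by
  rw [← Finset.powerset_univ, Finset.sum_powerset_apply_card, Finset.card_univ,
    Fintype.card_fin]
  simp only [nsmul_eq_mul]

lemma choose_le_pow_real (n u : ℕ) : (n.choose u : ℝ) ≤ (n:ℝ) ^ u := by
  have h : n.choose u ≤ n ^ u :=
    calc n.choose u ≤ n.choose u * u.factorial := Nat.le_mul_of_pos_right _ u.factorial_pos
      _ = n.descFactorial u := by rw [Nat.descFactorial_eq_factorial_mul_choose]; ring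
      _ ≤ n ^ u := Nat.descFactorial_le_pow _ _
  exact_mod_cast h

lemma choose_mul_factorial_le_real (n w : ℕ) :
    (n.choose w : ℝ) * (w.factorial : ℝ) ≤ (n:ℝ) ^ w := by
  have h : n.choose w * w.factorial ≤ n ^ w := by
    rw [mul_comm, ← Nat.descFactorial_eq_factorial_mul_choose]
    exact Nat.descFactorial_le_pow _ _
  exact_mod_cast h

lemma pow_self_le_exp_mul_factorial (w : ℕ) :
    ((w:ℝ)) ^ w ≤ Real.exp w * (w.factorial : ℝ) := by
  have hfac : (0:ℝ) < (w.factorial : ℝ) := by exact_mod_cast w.factorial_pos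
  have h := Real.sum_le_exp_of_nonneg (x := (w:ℝ)) (Nat.cast_nonneg w) (w+1)
  have hterm : ((w:ℝ)) ^ w / (w.factorial : ℝ) ≤ Real.exp w := by
    refine le_trans ?_ h
    refine Finset.single_le_sum (f := fun i => (w:ℝ)^i / i.factorial) ?_ ?_
    · intro i _; positivity
    · simp
  calc ((w:ℝ)) ^ w = ((w:ℝ)) ^ w / (w.factorial : ℝ) * (w.factorial : ℝ) := by
        field_simp
    _ ≤ Real.exp w * (w.factorial : ℝ) := by
        exact mul_le_mul_of_nonneg_right hterm hfac.le

lemma term_le {n : ℕ} {p : ℝ} (hn : 2 ≤ n) (hp0 : 0 < p) (hp1 : p ≤ 1)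
    (hpn : 5400 * Real.log n ≤ p ^ 2 * n) {u w : ℕ}
    (hu : 99 / p ≤ (u:ℝ)) (hw : p * n / 100 ≤ (w:ℝ)) :
    (2:ℝ) ^ (p * (u + 1) * w / 2) * p ^ w * (1 - p/2) ^ (u * w)
      ≤ (((n:ℝ) ^ 4)⁻¹) ^ u * (p ^ w * Real.exp (-(7.37) * w)) := by
  have hn0 : (0:ℝ) < n := by positivity
  have hn1 : (1:ℝ) ≤ n := by exact_mod_cast Nat.one_le_of_lt hn
  have hlogn : 0 ≤ Real.log n := Real.log_nonneg hn1
  have hw0 : (0:ℝ) ≤ w := Nat.cast_nonneg _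
  have hu0 : (0:ℝ) ≤ u := Nat.cast_nonneg _
  have hpu : (99:ℝ) ≤ p * u := by
    rw [div_le_iff₀ hp0] at hu
    linarith [hu]
  have hu99 : (99:ℝ) ≤ u := by nlinarith
  have hpw : p^2 * (n:ℝ) / 100 ≤ p * w := by nlinarith
  have hpw0 : (0:ℝ) ≤ p * w := mul_nonneg hp0.le hw0
  have hbase : (0:ℝ) ≤ 1 - p/2 := by linarith
  have hl2 : Real.log 2 ≤ 0.6932 := le_of_lt (lt_trans Real.log_two_lt_d9 (by norm_num))
  have hl20 : 0 ≤ Real.log 2 := Real.log_nonneg (by norm_num)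
  -- step 2 : (1-p/2)^(uw) ≤ exp(-(p/2) uw)
  have h1p : (1 - p/2) ^ (u*w) ≤ Real.exp (-(p/2) * ((u:ℝ)*(w:ℝ))) := by
    calc (1 - p/2)^(u*w) ≤ (Real.exp (-(p/2)))^(u*w) := by
          refine pow_le_pow_left₀ hbase ?_ _
          have := Real.add_one_le_exp (-(p/2))
          linarith
      _ = Real.exp (((u*w : ℕ):ℝ) * (-(p/2))) := (Real.exp_nat_mul _ _).symm
      _ = Real.exp (-(p/2) * ((u:ℝ)*(w:ℝ))) := by congr 1; push_cast; ring
  have hexp1 : Real.exp (-(0.0745) * (p*u*w)) ≤ (((n:ℝ)^4)⁻¹)^u := by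
    have key : 4 * Real.log n ≤ 0.0745 * (p*w) := by nlinarith
    have e1 : -(0.0745) * (p*(u:ℝ)*(w:ℝ)) ≤ (u:ℝ) * (-(4*Real.log n)) := by nlinarith
    calc Real.exp (-(0.0745) * (p*u*w)) ≤ Real.exp ((u:ℝ) * (-(4*Real.log n))) :=
          Real.exp_le_exp.mpr e1
      _ = (Real.exp (-(4*Real.log n)))^u := Real.exp_nat_mul _ _
      _ = (((n:ℝ)^4)⁻¹)^u := by
          congr 1
          rw [Real.exp_neg, show (4:ℝ) * Real.log n = Real.log ((n:ℝ)^4) by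
            rw [Real.log_pow]; norm_num, Real.exp_log (by positivity)]
  have hexp2 : Real.exp (-(0.0745) * (p*u*w)) ≤ Real.exp (-(7.37) * w) := by
    refine Real.exp_le_exp.mpr ?_
    nlinarith [mul_le_mul_of_nonneg_right hpu hw0]
  -- key polynomial inequality
  have hkey : Real.log 2 * (p * ((u:ℝ) + 1) * w / 2) - (p/2) * ((u:ℝ)*(w:ℝ))
      ≤ -(0.149) * (p*u*w) := by
    have h1 : Real.log 2 * (p * ((u:ℝ) + 1) * w / 2) ≤ 0.6932 * (p * ((u:ℝ) + 1) * w / 2) := by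
      have : (0:ℝ) ≤ p * ((u:ℝ) + 1) * w / 2 := by positivity
      nlinarith
    have h2 : (0.3466:ℝ) - 0.0044*(u:ℝ) ≤ 0 := by linarith
    have h3 : p*(w:ℝ)*(0.3466 - 0.0044*(u:ℝ)) ≤ 0 :=
      mul_nonpos_of_nonneg_of_nonpos hpw0 h2
    linarith [h1, h3]
  calc (2:ℝ) ^ (p * (u + 1) * w / 2) * p ^ w * (1 - p/2) ^ (u * w)
      = p ^ w * (Real.exp (Real.log 2 * (p * ((u:ℝ)+1) * w / 2)) * (1 - p/2) ^ (u*w)) := by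
        rw [Real.rpow_def_of_pos (by norm_num : (0:ℝ) < 2)]
        ring
    _ ≤ p ^ w * (Real.exp (Real.log 2 * (p * ((u:ℝ)+1) * w / 2))
          * Real.exp (-(p/2) * ((u:ℝ)*(w:ℝ)))) := by
        refine mul_le_mul_of_nonneg_left ?_ (by positivity)
        exact mul_le_mul_of_nonneg_left h1p (Real.exp_nonneg _)
    _ = p ^ w * Real.exp (Real.log 2 * (p * ((u:ℝ)+1) * w / 2) - (p/2) * ((u:ℝ)*(w:ℝ))) := by
        rw [← Real.exp_add]; ring_nf
    _ ≤ p ^ w * Real.exp (-(0.149) * (p*u*w)) := by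
        refine mul_le_mul_of_nonneg_left (Real.exp_le_exp.mpr hkey) (by positivity)
    _ = p ^ w * (Real.exp (-(0.0745) * (p*u*w)) * Real.exp (-(0.0745) * (p*u*w))) := by
        rw [← Real.exp_add]; ring_nf
    _ ≤ p ^ w * ((((n:ℝ)^4)⁻¹)^u * Real.exp (-(7.37) * w)) := by
        refine mul_le_mul_of_nonneg_left ?_ (by positivity)
        exact mul_le_mul hexp1 hexp2 (Real.exp_nonneg _) (by positivity)
    _ = (((n:ℝ) ^ 4)⁻¹) ^ u * (p ^ w * Real.exp (-(7.37) * w)) := by ring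


lemma geom_third_le (m : ℕ) : ∑ i ∈ Finset.range m, ((1:ℝ)/3)^i ≤ 3/2 := by
  rw [geom_sum_eq (by norm_num : (1/3:ℝ) ≠ 1)]
  have h0 : (0:ℝ) ≤ (1/3:ℝ)^m := by positivity
  rw [div_le_iff_of_neg (by norm_num : (1/3:ℝ) - 1 < 0)]
  linarith

lemma real_sum_le {n : ℕ} {p : ℝ} (hn : 2 ≤ n) (hp0 : 0 < p) (hp1 : p ≤ 1)
    (hpn : 5400 * Real.log n ≤ p ^ 2 * n) :
    ∑ t ∈ tripleSet p n, (2:ℝ) ^ (p * (t.2.1.card + 1) * t.2.2.card / 2) * p ^ t.2.2.card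
        * (1 - p/2) ^ (t.2.1.card * t.2.2.card) ≤ 1 / n := by
  classical
  have hn0 : (0:ℝ) < n := by positivity
  have hn1 : (1:ℝ) ≤ n := by exact_mod_cast Nat.one_le_of_lt hn
  set F : Finset (Fin n) → ℝ :=
    fun U => if 1 ≤ U.card then (((n:ℝ)^4)⁻¹)^U.card else 0 with hF
  set G : Finset (Fin n) → ℝ :=
    fun W => if p * n / 100 ≤ (W.card:ℝ) then p ^ W.card * Real.exp (-(7.37) * W.card) else 0
    with hG
  have hF0 : ∀ U, 0 ≤ F U := by
    intro U; rw [hF]; dsimp only; split <;> positivity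
  have hG0 : ∀ W, 0 ≤ G W := by
    intro W; rw [hG]; dsimp only; split <;> positivity
  have step1 : ∑ t ∈ tripleSet p n,
      (2:ℝ) ^ (p * (t.2.1.card + 1) * t.2.2.card / 2) * p ^ t.2.2.card
        * (1 - p/2) ^ (t.2.1.card * t.2.2.card) ≤ ∑ t ∈ tripleSet p n, F t.2.1 * G t.2.2 := by
    refine Finset.sum_le_sum fun t ht => ?_
    simp only [tripleSet, Finset.mem_filter, Finset.mem_univ, true_and] at ht
    obtain ⟨_, _, _, hu, hw⟩ := ht
    have hu1 : 1 ≤ t.2.1.card := by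
      rcases Nat.eq_zero_or_pos t.2.1.card with h | h
      · rw [h] at hu
        norm_num at hu
        have : (0:ℝ) < 99 / p := by positivity
        linarith
      · exact h
    have : F t.2.1 * G t.2.2
        = (((n:ℝ)^4)⁻¹)^t.2.1.card * (p ^ t.2.2.card * Real.exp (-(7.37) * t.2.2.card)) := by
      rw [hF, hG]; dsimp only; rw [if_pos hu1, if_pos hw]
    rw [this]
    exact term_le hn hp0 hp1 hpn hu hw
  have step2 : ∑ t ∈ tripleSet p n, F t.2.1 * G t.2.2
      ≤ ∑ t : Fin n × Finset (Fin n) × Finset (Fin n), F t.2.1 * G t.2.2 :=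
    Finset.sum_le_sum_of_subset_of_nonneg (Finset.subset_univ _)
      (fun t _ _ => mul_nonneg (hF0 _) (hG0 _))
  have step3 : ∑ t : Fin n × Finset (Fin n) × Finset (Fin n), F t.2.1 * G t.2.2
      = (n:ℝ) * ((∑ U : Finset (Fin n), F U) * (∑ W : Finset (Fin n), G W)) := by
    calc ∑ t : Fin n × Finset (Fin n) × Finset (Fin n), F t.2.1 * G t.2.2
        = ∑ _v : Fin n, ∑ b : Finset (Fin n) × Finset (Fin n), F b.1 * G b.2 :=
          Fintype.sum_prod_type _
      _ = ∑ _v : Fin n, ∑ U : Finset (Fin n), ∑ W : Finset (Fin n), F U * G W :=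
          Finset.sum_congr rfl fun v _ => Fintype.sum_prod_type _
      _ = ∑ _v : Fin n, (∑ U : Finset (Fin n), F U) * (∑ W : Finset (Fin n), G W) :=
          Finset.sum_congr rfl fun v _ => (Finset.sum_mul_sum _ _ _ _).symm
      _ = (n:ℝ) * ((∑ U : Finset (Fin n), F U) * (∑ W : Finset (Fin n), G W)) := by
          rw [Finset.sum_const, Finset.card_univ, Fintype.card_fin, nsmul_eq_mul]
  have hSU : (∑ U : Finset (Fin n), F U) ≤ ((n:ℝ)+1) * ((n:ℝ)^3)⁻¹ := by
    have hFc : ∀ U : Finset (Fin n), F U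
        = (fun u : ℕ => if 1 ≤ u then (((n:ℝ)^4)⁻¹)^u else 0) U.card := fun U => rfl
    rw [Finset.sum_congr rfl (fun U _ => hFc U),
      sum_finset_card (fun u : ℕ => if 1 ≤ u then (((n:ℝ)^4)⁻¹)^u else 0)]
    refine (Finset.sum_le_card_nsmul _ _ (((n:ℝ)^3)⁻¹) ?_).trans ?_
    · intro u hu
      by_cases h1 : 1 ≤ u
      · rw [if_pos h1]
        calc (n.choose u : ℝ) * (((n:ℝ)^4)⁻¹)^u ≤ (n:ℝ)^u * (((n:ℝ)^4)⁻¹)^u :=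
              mul_le_mul_of_nonneg_right (choose_le_pow_real n u) (by positivity)
          _ = (((n:ℝ)^3)⁻¹)^u := by
              rw [← mul_pow]
              congr 1
              field_simp
          _ ≤ (((n:ℝ)^3)⁻¹)^1 := by
              refine pow_le_pow_of_le_one (by positivity) ?_ h1
              exact inv_le_one_of_one_le₀ (one_le_pow₀ hn1)
          _ = ((n:ℝ)^3)⁻¹ := pow_one _
      · rw [if_neg h1, mul_zero]
        positivity
    · rw [Finset.card_range, nsmul_eq_mul]
      push_cast
      exact le_refl _
  have hSW : (∑ W : Finset (Fin n), G W) ≤ 1/2 := by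
    have hGc : ∀ W : Finset (Fin n), G W
        = (fun w : ℕ => if p * n / 100 ≤ (w:ℝ) then p ^ w * Real.exp (-(7.37) * w) else 0)
            W.card := fun W => rfl
    rw [Finset.sum_congr rfl (fun W _ => hGc W), sum_finset_card
      (fun w : ℕ => if p * n / 100 ≤ (w:ℝ) then p ^ w * Real.exp (-(7.37) * w) else 0)]
    have hperw : ∀ w ∈ Finset.range (n+1),
        (n.choose w : ℝ) * (if p * n / 100 ≤ (w:ℝ) then p ^ w * Real.exp (-(7.37) * w) else 0)
          ≤ (if 1 ≤ w then ((1:ℝ)/3)^w else 0) := by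
      intro w _
      by_cases hc : p * (n:ℝ) / 100 ≤ (w:ℝ)
      · rw [if_pos hc]
        have hw1 : 1 ≤ w := by
          rcases Nat.eq_zero_or_pos w with h | h
          · exfalso
            rw [h] at hc
            norm_num at hc
            have : (0:ℝ) < p * n / 100 := by positivity
            linarith
          · exact h
        rw [if_pos hw1]
        have hnp100 : (n:ℝ) * p ≤ 100 * w := by nlinarith
        have hCw : (n.choose w : ℝ) * p ^ w ≤ (100:ℝ)^w * Real.exp w := by
          have hfac : (0:ℝ) < (w.factorial : ℝ) := by exact_mod_cast w.factorial_pos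
          refine le_of_mul_le_mul_right ?_ hfac
          calc (n.choose w : ℝ) * p^w * w.factorial
              = ((n.choose w : ℝ) * w.factorial) * p^w := by ring
            _ ≤ (n:ℝ)^w * p^w :=
                mul_le_mul_of_nonneg_right (choose_mul_factorial_le_real n w) (by positivity)
            _ = ((n:ℝ)*p)^w := (mul_pow _ _ _).symm
            _ ≤ ((100:ℝ)*w)^w := pow_le_pow_left₀ (by positivity) (by linarith) _
            _ = (100:ℝ)^w * (w:ℝ)^w := mul_pow _ _ _
            _ ≤ (100:ℝ)^w * (Real.exp w * w.factorial) :=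
                mul_le_mul_of_nonneg_left (pow_self_le_exp_mul_factorial w) (by positivity)
            _ = (100:ℝ)^w * Real.exp w * w.factorial := by ring
        have hexpeq : Real.exp (w:ℝ) * Real.exp (-(7.37) * w) = Real.exp (-(6.37)) ^ w := by
          rw [← Real.exp_add, ← Real.exp_nat_mul]
          congr 1
          ring
        have h637 : (300:ℝ) ≤ Real.exp 6.37 := by
          have h1 : (2.7182818283:ℝ) ^ (6:ℕ) < Real.exp 1 ^ (6:ℕ) := by
            refine pow_lt_pow_left₀ Real.exp_one_gt_d9 (by norm_num) (by norm_num)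
          have h2 : Real.exp 1 ^ (6:ℕ) = Real.exp 6 := by
            rw [← Real.exp_nat_mul]
            norm_num
          have h3 : Real.exp 6 ≤ Real.exp 6.37 := Real.exp_le_exp.mpr (by norm_num)
          nlinarith
        have hsmall : (100:ℝ) * Real.exp (-(6.37)) ≤ 1/3 := by
          rw [Real.exp_neg]
          have hpos : (0:ℝ) < Real.exp 6.37 := Real.exp_pos _
          calc (100:ℝ) * (Real.exp 6.37)⁻¹ ≤ 100 * (300:ℝ)⁻¹ := by
                refine mul_le_mul_of_nonneg_left ?_ (by norm_num)
                exact inv_anti₀ (by norm_num) h637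
            _ ≤ 1/3 := by norm_num
        calc (n.choose w : ℝ) * (p ^ w * Real.exp (-(7.37) * w))
            = ((n.choose w : ℝ) * p ^ w) * Real.exp (-(7.37) * w) := by ring
          _ ≤ ((100:ℝ)^w * Real.exp w) * Real.exp (-(7.37) * w) :=
              mul_le_mul_of_nonneg_right hCw (Real.exp_nonneg _)
          _ = ((100:ℝ) * Real.exp (-(6.37)))^w := by
              rw [mul_pow, mul_assoc, hexpeq]
          _ ≤ ((1:ℝ)/3)^w := pow_le_pow_left₀ (by positivity) hsmall _
      · rw [if_neg hc, mul_zero]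
        split <;> positivity
    refine (Finset.sum_le_sum hperw).trans ?_
    have hsplit : ∑ w ∈ Finset.range (n+1), (if 1 ≤ w then ((1:ℝ)/3)^w else 0)
        = ∑ w ∈ Finset.Ico 1 (n+1), ((1:ℝ)/3)^w := by
      rw [← Finset.sum_filter]
      congr 1
      ext w
      simp only [Finset.mem_filter, Finset.mem_range, Finset.mem_Ico]
      omega
    rw [hsplit, Finset.sum_Ico_eq_sum_range]
    simp only [Nat.add_sub_cancel]
    calc ∑ i ∈ Finset.range n, ((1:ℝ)/3)^(1+i)
        = (1/3) * ∑ i ∈ Finset.range n, ((1:ℝ)/3)^i := by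
          rw [Finset.mul_sum]
          exact Finset.sum_congr rfl fun i _ => by rw [pow_add, pow_one]
      _ ≤ (1/3) * (3/2) := mul_le_mul_of_nonneg_left (geom_third_le n) (by norm_num)
      _ = 1/2 := by norm_num
  refine step1.trans (step2.trans ?_)
  rw [step3]
  have hSU0 : (0:ℝ) ≤ ∑ U : Finset (Fin n), F U := Finset.sum_nonneg fun U _ => hF0 U
  have hSW0 : (0:ℝ) ≤ ∑ W : Finset (Fin n), G W := Finset.sum_nonneg fun W _ => hG0 W
  calc (n:ℝ) * ((∑ U : Finset (Fin n), F U) * (∑ W : Finset (Fin n), G W))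
      ≤ (n:ℝ) * ((((n:ℝ)+1) * ((n:ℝ)^3)⁻¹) * (1/2)) := by
        refine mul_le_mul_of_nonneg_left ?_ hn0.le
        exact mul_le_mul hSU hSW hSW0 (by positivity)
    _ ≤ 1 / n := by
        rw [le_div_iff₀ hn0]
        have hne : ((n:ℝ)^3) ≠ 0 := by positivity
        field_simp
        have hkey : (0:ℝ) ≤ (n:ℝ)^2 * ((n:ℝ) - 1) :=
          mul_nonneg (by positivity) (by linarith)
        nlinarith [hkey]


lemma gnp_good_ge {n : ℕ} {p : ℝ} (hn : 2 ≤ n) (hp0 : 0 < p) (hp1 : p ≤ 1)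
    (hpn : 5400 * Real.log n ≤ p ^ 2 * n) :
    1 - ENNReal.ofReal (1/(n:ℝ)) ≤ gnp n p
      {ω | ∀ v : Fin n, ∀ U W : Set (Fin n), Disjoint U W →
              W ⊆ (graphOf ω).neighborSet v →
              100 / p ≤ (U.ncard : ℝ) → p * n / 100 ≤ (W.ncard : ℝ) →
              p * U.ncard * W.ncard / 2 < (edgesBetween (graphOf ω) U W : ℝ)} := by
  haveI : IsProbabilityMeasure (gnp n p) := by unfold gnp; infer_instance
  set Good := {ω : Sym2 (Fin n) → Bool | ∀ v : Fin n, ∀ U W : Set (Fin n), Disjoint U W →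
      W ⊆ (graphOf ω).neighborSet v →
      100 / p ≤ (U.ncard : ℝ) → p * n / 100 ≤ (W.ncard : ℝ) →
      p * U.ncard * W.ncard / 2 < (edgesBetween (graphOf ω) U W : ℝ)} with hGood
  have hcompl : gnp n p Goodᶜ ≤ ENNReal.ofReal (1/(n:ℝ)) := by
    have h1 : Goodᶜ ⊆ ⋃ t ∈ tripleSet p n, badEvent p t := by
      rw [hGood, Set.compl_setOf]
      exact bad_subset hp0 hp1
    calc gnp n p Goodᶜ ≤ gnp n p (⋃ t ∈ tripleSet p n, badEvent p t) := measure_mono h1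
      _ ≤ ENNReal.ofReal (∑ t ∈ tripleSet p n,
            (2:ℝ) ^ (p * (t.2.1.card + 1) * t.2.2.card / 2) * p ^ t.2.2.card
              * (1 - p/2) ^ (t.2.1.card * t.2.2.card)) := gnp_bad_le hp0 hp1
      _ ≤ ENNReal.ofReal (1/(n:ℝ)) :=
          ENNReal.ofReal_le_ofReal (real_sum_le hn hp0 hp1 hpn)
  have heq : gnp n p Good = 1 - gnp n p Goodᶜ := by
    have := prob_compl_eq_one_sub (μ := gnp n p) (measurableSet_pi_bool Goodᶜ)
    rw [compl_compl] at this
    rw [this]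
  rw [heq]
  exact tsub_le_tsub_left hcompl 1

/-- If `p ≫ ((log n)/n)^{1/2}`, then a.a.s.: for every vertex
`v` and all disjoint `U ⊆ V`, `W ⊆ N(v)` with `|U| ≥ 100/p`, `|W| ≥ pn/100`,
we have `e(U,W) > p|U||W|/2`. -/
theorem stmt_4 (p : ℕ → ℝ) (hp : ∀ n, 0 ≤ p n ∧ p n ≤ 1)
    (hgrow : Tendsto (fun n : ℕ => p n / Real.sqrt (Real.log n / n)) atTop atTop) :
    Tendsto (fun n : ℕ => gnp n (p n)
      {ω | ∀ v : Fin n, ∀ U W : Set (Fin n), Disjoint U W →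
              W ⊆ (graphOf ω).neighborSet v →
              100 / p n ≤ (U.ncard : ℝ) → p n * n / 100 ≤ (W.ncard : ℝ) →
              p n * U.ncard * W.ncard / 2 < (edgesBetween (graphOf ω) U W : ℝ)})
      atTop (𝓝 1) := by
  have hlow : Tendsto (fun n : ℕ => 1 - ENNReal.ofReal (1/(n:ℝ))) atTop (𝓝 (1:ℝ≥0∞)) := by
    have h0 : Tendsto (fun n : ℕ => ENNReal.ofReal (1/(n:ℝ))) atTop (𝓝 0) := by
      rw [← ENNReal.ofReal_zero]
      exact ENNReal.tendsto_ofReal tendsto_one_div_atTop_nhds_zero_nat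
    have := ENNReal.Tendsto.sub (tendsto_const_nhds : Tendsto (fun _ : ℕ => (1:ℝ≥0∞)) atTop (𝓝 1))
      h0 (Or.inl (by norm_num))
    simpa using this
  refine tendsto_of_tendsto_of_tendsto_of_le_of_le' hlow tendsto_const_nhds ?_ ?_
  · have hev : ∀ᶠ n : ℕ in atTop, (80:ℝ) ≤ p n / Real.sqrt (Real.log n / n) :=
      hgrow.eventually_ge_atTop 80
    filter_upwards [hev, eventually_ge_atTop 2] with n h80 hn2
    have hn0 : (0:ℝ) < n := by
      have : (2:ℝ) ≤ n := by exact_mod_cast hn2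
      linarith
    have hlogpos : 0 < Real.log n := Real.log_pos (by
      have : (2:ℝ) ≤ n := by exact_mod_cast hn2
      linarith)
    have hs0 : 0 < Real.sqrt (Real.log n / n) := Real.sqrt_pos.mpr (div_pos hlogpos hn0)
    have h80s : 80 * Real.sqrt (Real.log n / n) ≤ p n := by
      rw [le_div_iff₀ hs0] at h80
      linarith
    have hp0 : 0 < p n := lt_of_lt_of_le (by positivity) h80s
    have hsq : Real.sqrt (Real.log n / n) ^ 2 = Real.log n / n :=
      Real.sq_sqrt (le_of_lt (div_pos hlogpos hn0))
    have hpn : 5400 * Real.log n ≤ p n ^ 2 * n := by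
      have h1 : (80 * Real.sqrt (Real.log n / n)) ^ 2 ≤ p n ^ 2 :=
        pow_le_pow_left₀ (by positivity) h80s 2
      have h2 : (80 * Real.sqrt (Real.log n / n)) ^ 2 = 6400 * (Real.log n / n) := by
        rw [mul_pow, hsq]; norm_num
      have h3 : 6400 * (Real.log n / n) * n = 6400 * Real.log n := by
        field_simp
      have h4 : 6400 * (Real.log n / n) * n ≤ p n ^ 2 * n := by
        refine mul_le_mul_of_nonneg_right ?_ hn0.le
        rw [← h2]; exact h1
      rw [h3] at h4
      linarith [hlogpos]
    exact gnp_good_ge hn2 hp0 (hp n).2 hpn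
  · refine Eventually.of_forall fun n => ?_
    haveI : IsProbabilityMeasure (gnp n (p n)) := by unfold gnp; infer_instance
    exact prob_le_one

end MonochromaticTrees
end

section
/- If p = p(n) ≫ ((log n)/n)^{1/2}, then asymptotically almost surely G ∈ G(n,p) satisfies: every subgraph H ⊆ G on at most 100/p vertices is 10 log n-degenerate. -/
open MeasureTheory Filter Topology SimpleGraph

namespace MonochromaticTrees

variable {V : Type*} {C : Type*}

lemma aux_one_add_inv_pow (k : ℕ) (h : 0 < k) : (1 + 1/(k:ℝ)) ^ k ≤ 3 := by
  have hk0 : (0:ℝ) < k := by exact_mod_cast h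
  have h1 : (1 + 1/(k:ℝ)) ≤ Real.exp (1/(k:ℝ)) := by
    have := Real.add_one_le_exp (1/(k:ℝ)); linarith
  have h2 : (1 + 1/(k:ℝ)) ^ k ≤ Real.exp (1/(k:ℝ)) ^ k :=
    pow_le_pow_left₀ (by positivity) h1 k
  have h3 : Real.exp (1/(k:ℝ)) ^ k = Real.exp ((k:ℝ) * (1/(k:ℝ))) := by
    rw [← Real.exp_nat_mul]
  have h4 : (k:ℝ) * (1/(k:ℝ)) = 1 := by field_simp
  have h5 := Real.exp_one_lt_d9
  rw [h3, h4] at h2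
  linarith

lemma pow_self_le_three_pow_mul_factorial (k : ℕ) : (k:ℝ)^k ≤ 3^k * k.factorial := by
  induction k with
  | zero => simp
  | succ k ih =>
    rcases Nat.eq_zero_or_pos k with rfl | hk
    · norm_num
    have hk0 : (0:ℝ) < k := by exact_mod_cast hk
    have hkey : ((k:ℝ)+1)^k ≤ 3 * (k:ℝ)^k := by
      have h1 : ((k:ℝ)+1) = (k:ℝ) * (1 + 1/(k:ℝ)) := by field_simp
      rw [h1, mul_pow]
      have := aux_one_add_inv_pow k hk
      nlinarith [pow_nonneg (le_of_lt hk0) k, pow_nonneg (by positivity : (0:ℝ) ≤ 1 + 1/(k:ℝ)) k]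
    have hfac : ((k+1).factorial : ℝ) = ((k:ℝ)+1) * k.factorial := by
      rw [Nat.factorial_succ]; push_cast; ring
    have h6 : ((k:ℝ)+1)^(k+1) = ((k:ℝ)+1) * ((k:ℝ)+1)^k := by ring
    push_cast
    rw [h6, hfac]
    calc ((k:ℝ)+1) * ((k:ℝ)+1)^k ≤ ((k:ℝ)+1) * (3 * (k:ℝ)^k) :=
          mul_le_mul_of_nonneg_left hkey (by positivity)
      _ ≤ ((k:ℝ)+1) * (3 * (3^k * k.factorial)) := by
          have : 3 * (k:ℝ)^k ≤ 3 * (3^k * k.factorial) := by linarith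
          exact mul_le_mul_of_nonneg_left this (by positivity)
      _ = 3^(k+1) * (((k:ℝ)+1) * k.factorial) := by ring

instance (n : ℕ) (p : ℝ) : IsProbabilityMeasure (gnp n p) := by
  unfold gnp; infer_instance

lemma gnp_cyl (n : ℕ) (p : ℝ) (h1 : p ≤ 1) (T : Finset (Sym2 (Fin n))) :
    gnp n p {ω | ∀ e ∈ T, ω e = true} = ENNReal.ofReal p ^ T.card := by
  classical
  have hq : min (Real.toNNReal p) 1 = Real.toNNReal p := by
    apply min_eq_left
    simpa using h1
  have hset : {ω : Sym2 (Fin n) → Bool | ∀ e ∈ T, ω e = true} =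
      Set.pi Set.univ (fun e => if e ∈ T then ({true} : Set Bool) else Set.univ) := by
    ext ω
    simp only [Set.mem_setOf_eq, Set.mem_pi, Set.mem_univ, forall_true_left]
    constructor
    · intro h e
      by_cases he : e ∈ T <;> simp [he, h e]
    · intro h e he
      have := h e
      simp [he] at this
      exact this
  rw [gnp, hset, Measure.pi_pi]
  have hν : ∀ e : Sym2 (Fin n),
      (PMF.bernoulli (min (Real.toNNReal p) 1) (min_le_right _ _)).toMeasure
        (if e ∈ T then ({true} : Set Bool) else Set.univ)
      = if e ∈ T then ENNReal.ofReal p else 1 := by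
    intro e
    by_cases he : e ∈ T <;> simp only [he, if_true, if_false]
    · rw [PMF.toMeasure_apply_singleton _ _ (measurableSet_singleton _)]
      simp [hq, ENNReal.ofReal, PMF.bernoulli_apply]
    · exact measure_univ
  simp only [hν]
  rw [Finset.prod_ite_mem Finset.univ T fun _ => ENNReal.ofReal p]
  simp [Finset.univ_inter]

lemma exists_edge_subset {n : ℕ} (ω : Sym2 (Fin n) → Bool) (S : Finset (Fin n)) (D : ℕ)
    (h : ∀ v ∈ S, D ≤ (((graphOf ω).neighborSet v) ∩ ↑S).ncard) :
    ∃ T : Finset (Sym2 (Fin n)), T.card = S.card * D / 2 ∧ (∀ e ∈ T, ω e = true) ∧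
      ∀ e ∈ T, ∃ q : Fin n × Fin n, q.1 ∈ S ∧ q.2 ∈ S ∧ q.1 ≠ q.2 ∧ e = Sym2.mk q.1 q.2 := by
  classical
  set k := S.card * D / 2 with hk
  set P : Finset (Fin n × Fin n) := (S ×ˢ S).filter (fun q => (graphOf ω).Adj q.1 q.2) with hP
  have hdeg : ∀ v ∈ S, (((graphOf ω).neighborSet v) ∩ ↑S).ncard
      = (S.filter fun u => (graphOf ω).Adj v u).card := by
    intro v _
    rw [← Set.ncard_coe_finset]
    congr 1
    ext u
    simp only [Set.mem_inter_iff, SimpleGraph.mem_neighborSet, Finset.coe_filter,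
      Set.mem_setOf_eq, Finset.mem_coe]
    tauto
  have hfib : ∀ v ∈ S, (P.filter fun q => q.1 = v)
      = {v} ×ˢ (S.filter fun u => (graphOf ω).Adj v u) := by
    intro v hv
    ext q
    simp only [hP, Finset.mem_filter, Finset.mem_product, Finset.mem_singleton]
    constructor
    · rintro ⟨⟨⟨h1, h2⟩, h3⟩, rfl⟩
      exact ⟨rfl, h2, h3⟩
    · rintro ⟨rfl, h2, h3⟩
      exact ⟨⟨⟨hv, h2⟩, h3⟩, rfl⟩
  have hPcard : S.card * D ≤ P.card := by
    have hsum : P.card = ∑ v ∈ S, (P.filter fun q => q.1 = v).card :=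
      Finset.card_eq_sum_card_fiberwise (f := fun q : Fin n × Fin n => q.1) (t := S)
        (fun q hq => by
          have := (Finset.mem_filter.mp hq).1
          exact (Finset.mem_product.mp this).1)
    rw [hsum]
    calc S.card * D = ∑ _v ∈ S, D := by rw [Finset.sum_const, smul_eq_mul, mul_comm]
      _ ≤ ∑ v ∈ S, (P.filter fun q => q.1 = v).card := by
          apply Finset.sum_le_sum
          intro v hv
          rw [hfib v hv, Finset.card_product, Finset.card_singleton, one_mul]
          rw [← hdeg v hv]
          exact h v hv
  set T' : Finset (Sym2 (Fin n)) := P.image (fun q => Sym2.mk q.1 q.2) with hT'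
  have hPT : P.card ≤ 2 * T'.card := by
    apply Finset.card_le_mul_card_image
    intro e he
    obtain ⟨q₀, _, rfl⟩ := Finset.mem_image.mp he
    have hsub : (P.filter fun q => Sym2.mk q.1 q.2 = Sym2.mk q₀.1 q₀.2) ⊆ {q₀, q₀.swap} := by
      intro q hq
      have := (Finset.mem_filter.mp hq).2
      rw [Sym2.mk_eq_mk_iff] at this
      simp only [Finset.mem_insert, Finset.mem_singleton]
      exact this
    calc (P.filter fun q => Sym2.mk q.1 q.2 = Sym2.mk q₀.1 q₀.2).card ≤ ({q₀, q₀.swap} : Finset _).card :=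
          Finset.card_le_card hsub
      _ ≤ 2 := Finset.card_insert_le _ _ |>.trans (by simp)
  have hkT : k ≤ T'.card := by omega
  obtain ⟨T, hTsub, hTcard⟩ := Finset.exists_subset_card_eq hkT
  refine ⟨T, hTcard, ?_, ?_⟩
  · intro e he
    obtain ⟨q, hq, rfl⟩ := Finset.mem_image.mp (hTsub he)
    have hadj := (Finset.mem_filter.mp hq).2
    have : Sym2.mk q.1 q.2 = s(q.1, q.2) := by rfl
    rw [this]
    have := hadj
    rw [graphOf, SimpleGraph.fromEdgeSet_adj] at this
    exact this.1
  · intro e he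
    obtain ⟨q, hq, rfl⟩ := Finset.mem_image.mp (hTsub he)
    have hqm := Finset.mem_filter.mp hq
    have hmem := Finset.mem_product.mp hqm.1
    exact ⟨q, hmem.1, hmem.2, hqm.2.ne, rfl⟩

lemma badS_measure {n : ℕ} {p : ℝ} (h1 : p ≤ 1) (S : Finset (Fin n)) (D : ℕ) :
    gnp n p {ω | ∀ v ∈ S, D ≤ (((graphOf ω).neighborSet v) ∩ ↑S).ncard}
      ≤ ((S.card ^ 2).choose (S.card * D / 2)) * ENNReal.ofReal p ^ (S.card * D / 2) := by
  classical
  set k := S.card * D / 2 with hk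
  set pairs : Finset (Sym2 (Fin n)) :=
    ((S ×ˢ S).filter fun q => q.1 ≠ q.2).image (fun q => Sym2.mk q.1 q.2) with hpairs
  have hsub : {ω : Sym2 (Fin n) → Bool | ∀ v ∈ S, D ≤ (((graphOf ω).neighborSet v) ∩ ↑S).ncard}
      ⊆ ⋃ T ∈ pairs.powersetCard k, {ω : Sym2 (Fin n) → Bool | ∀ e ∈ T, ω e = true} := by
    intro ω hω
    obtain ⟨T, hTcard, hTtrue, hTpairs⟩ := exists_edge_subset ω S D hω
    have hmem : T ∈ pairs.powersetCard k := by
      rw [Finset.mem_powersetCard]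
      refine ⟨?_, hTcard⟩
      intro e he
      obtain ⟨q, hq1, hq2, hne, rfl⟩ := hTpairs e he
      exact Finset.mem_image.mpr ⟨q, Finset.mem_filter.mpr ⟨Finset.mem_product.mpr ⟨hq1, hq2⟩, hne⟩, rfl⟩
    exact Set.mem_biUnion hmem hTtrue
  have hpc : pairs.card ≤ S.card ^ 2 := by
    calc pairs.card ≤ ((S ×ˢ S).filter fun q => q.1 ≠ q.2).card := Finset.card_image_le
      _ ≤ (S ×ˢ S).card := Finset.card_filter_le _ _
      _ = S.card ^ 2 := by rw [Finset.card_product, sq]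
  calc gnp n p {ω | ∀ v ∈ S, D ≤ (((graphOf ω).neighborSet v) ∩ ↑S).ncard}
      ≤ gnp n p (⋃ T ∈ pairs.powersetCard k, {ω : Sym2 (Fin n) → Bool | ∀ e ∈ T, ω e = true}) :=
        measure_mono hsub
    _ ≤ ∑ T ∈ pairs.powersetCard k, gnp n p {ω : Sym2 (Fin n) → Bool | ∀ e ∈ T, ω e = true} :=
        measure_biUnion_finset_le _ _
    _ = ∑ T ∈ pairs.powersetCard k, ENNReal.ofReal p ^ T.card := by
        apply Finset.sum_congr rfl
        intro T hT
        exact gnp_cyl n p h1 T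
    _ = ∑ T ∈ pairs.powersetCard k, ENNReal.ofReal p ^ k := by
        apply Finset.sum_congr rfl
        intro T hT
        rw [(Finset.mem_powersetCard.mp hT).2]
    _ = (pairs.card.choose k : ENNReal) * ENNReal.ofReal p ^ k := by
        rw [Finset.sum_const, Finset.card_powersetCard, nsmul_eq_mul]
    _ ≤ ((S.card ^ 2).choose k : ENNReal) * ENNReal.ofReal p ^ k := by
        apply mul_le_mul_left
        exact_mod_cast Nat.choose_le_choose k hpc

lemma real_est (n s D : ℕ) (p : ℝ) (hp0 : 0 ≤ p) (hs : 1 ≤ s) (hsp : (s:ℝ) * p ≤ 100)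
    (hlog : 250 ≤ Real.log n) (hDlog : 10 * Real.log n ≤ (D:ℝ)) :
    ((s ^ 2).choose (s * D / 2) : ℝ) * p ^ (s * D / 2) ≤ ((n:ℝ)⁻¹) ^ (3 * s) := by
  set k := s * D / 2 with hk
  have hsR : (1:ℝ) ≤ s := by exact_mod_cast hs
  have hDR : (2500:ℝ) ≤ D := by linarith
  have hD : 2500 ≤ D := by exact_mod_cast hDR
  have hsD3 : 3 ≤ s * D := le_trans (by omega) (Nat.mul_le_mul hs hD)
  have hk3 : s * D ≤ 3 * k := by omega
  have hk1 : 1 ≤ k := by omega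
  have hkR : (s:ℝ) * D ≤ 3 * k := by exact_mod_cast hk3
  have hkpos : (0:ℝ) < k := by
    have : (1:ℝ) ≤ k := by exact_mod_cast hk1
    linarith
  have hn1 : (1:ℝ) < n := by
    by_contra hcon
    push_neg at hcon
    have : Real.log n ≤ 0 := Real.log_nonpos (by positivity) hcon
    linarith
  have hn0 : (0:ℝ) < n := by linarith
  have hlogpos : (0:ℝ) < Real.log n := by linarith
  have hDpos : (0:ℝ) < D := by linarith
  -- step 1 : choose bound
  have hchoose : ((s ^ 2).choose k : ℝ) ≤ (3 * (s:ℝ)^2 / k) ^ k := by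
    have hA : ((s ^ 2).choose k : ℝ) * k.factorial ≤ ((s:ℝ)^2) ^ k := by
      have heq : (s ^ 2).choose k * k.factorial ≤ (s ^ 2) ^ k := by
        calc (s ^ 2).choose k * k.factorial = (s ^ 2).descFactorial k := by
              rw [Nat.descFactorial_eq_factorial_mul_choose]; ring
          _ ≤ (s ^ 2) ^ k := Nat.descFactorial_le_pow _ _
      exact_mod_cast heq
    have hB : (k:ℝ)^k ≤ 3^k * k.factorial := pow_self_le_three_pow_mul_factorial k
    have hCpos : (0:ℝ) ≤ ((s ^ 2).choose k : ℝ) := by positivity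
    have hkey : ((s ^ 2).choose k : ℝ) * (k:ℝ)^k ≤ (3 * (s:ℝ)^2) ^ k := by
      calc ((s ^ 2).choose k : ℝ) * (k:ℝ)^k ≤ ((s ^ 2).choose k : ℝ) * (3^k * k.factorial) :=
            mul_le_mul_of_nonneg_left hB hCpos
        _ = 3^k * (((s ^ 2).choose k : ℝ) * k.factorial) := by ring
        _ ≤ 3^k * ((s:ℝ)^2) ^ k := by
            apply mul_le_mul_of_nonneg_left hA (by positivity)
        _ = (3 * (s:ℝ)^2) ^ k := by rw [mul_pow]
    have hkk : (0:ℝ) < (k:ℝ)^k := by positivity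
    rw [div_pow, le_div_iff₀ hkk]
    exact hkey
  -- base bound
  have hbase : 3 * (s:ℝ)^2 / k * p ≤ 900 / D := by
    have e1 : 3 * (s:ℝ)^2 / k * p = 3 * ((s:ℝ)^2 * p) / k := by ring
    rw [e1]
    rw [div_le_div_iff₀ hkpos hDpos]
    -- 3 s² p D ≤ 900 k ; use sD ≤ 3k and sp ≤ 100
    have h1 : 3 * ((s:ℝ)^2 * p) * D = 3 * ((s:ℝ) * p) * ((s:ℝ) * D) := by ring
    rw [h1]
    have hsp0 : 0 ≤ (s:ℝ) * p := by positivity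
    calc 3 * ((s:ℝ) * p) * ((s:ℝ) * D) ≤ 3 * ((s:ℝ) * p) * (3 * k) := by
          apply mul_le_mul_of_nonneg_left hkR (by positivity)
      _ = 9 * ((s:ℝ) * p) * k := by ring
      _ ≤ 9 * 100 * k := by
          have := mul_le_mul_of_nonneg_right (mul_le_mul_of_nonneg_left hsp (by norm_num : (0:ℝ) ≤ 9)) hkpos.le
          linarith
      _ = 900 * k := by ring
  have hbase0 : 0 ≤ 3 * (s:ℝ)^2 / k * p := by positivity
  have hexp1 : 900 / (D:ℝ) ≤ Real.exp (-1) := by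
    have h1 : 900 / (D:ℝ) ≤ 900 / 2500 := by gcongr
    have h2 : Real.exp (-1) = (Real.exp 1)⁻¹ := by rw [Real.exp_neg]
    have h3 := Real.exp_one_lt_d9
    have h4 : (0:ℝ) < Real.exp 1 := Real.exp_pos 1
    have h5 : ((2.7182818286:ℝ))⁻¹ ≤ (Real.exp 1)⁻¹ := by
      apply inv_anti₀ h4 h3.le
    have h6 : (900:ℝ)/2500 ≤ ((2.7182818286:ℝ))⁻¹ := by norm_num
    rw [h2]
    linarith
  -- assemble
  have hmain : ((s ^ 2).choose k : ℝ) * p ^ k ≤ Real.exp (-1) ^ k := by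
    calc ((s ^ 2).choose k : ℝ) * p ^ k ≤ (3 * (s:ℝ)^2 / k) ^ k * p ^ k := by
          apply mul_le_mul_of_nonneg_right hchoose (by positivity)
      _ = (3 * (s:ℝ)^2 / k * p) ^ k := by rw [← mul_pow]
      _ ≤ Real.exp (-1) ^ k := by
          apply pow_le_pow_left₀ hbase0 (le_trans hbase hexp1)
  have hexpk : Real.exp (-1) ^ k = Real.exp (-(k:ℝ)) := by
    rw [← Real.exp_nat_mul]; ring_nf
  have hkge : 3 * (s:ℝ) * Real.log n ≤ (k:ℝ) := by
    have h1 : (s:ℝ) * (10 * Real.log n) ≤ (s:ℝ) * D := by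
      apply mul_le_mul_of_nonneg_left hDlog (by positivity)
    nlinarith [mul_le_mul_of_nonneg_left hlogpos.le (by positivity : (0:ℝ) ≤ (s:ℝ))]
  have hfinal : Real.exp (-(k:ℝ)) ≤ Real.exp (-(3 * (s:ℝ) * Real.log n)) := by
    apply Real.exp_le_exp.mpr
    linarith
  have heq : Real.exp (-(3 * (s:ℝ) * Real.log n)) = ((n:ℝ)⁻¹) ^ (3 * s) := by
    have h1 : ((n:ℝ)⁻¹) = Real.exp (-Real.log n) := by
      rw [← Real.log_inv, Real.exp_log (inv_pos.mpr hn0)]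
    rw [h1, ← Real.exp_nat_mul]
    congr 1
    push_cast
    ring
  calc ((s ^ 2).choose k : ℝ) * p ^ k ≤ Real.exp (-1) ^ k := hmain
    _ = Real.exp (-(k:ℝ)) := hexpk
    _ ≤ Real.exp (-(3 * (s:ℝ) * Real.log n)) := hfinal
    _ = ((n:ℝ)⁻¹) ^ (3 * s) := heq

lemma sum_pow_card (n : ℕ) (x : ℝ) :
    ∑ S ∈ (Finset.univ : Finset (Finset (Fin n))), x ^ S.card = (x + 1) ^ n := by
  have h := Finset.prod_add (fun _ : Fin n => x) (fun _ : Fin n => (1:ℝ)) Finset.univ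
  simp only [Finset.prod_const, one_pow, mul_one, Finset.card_univ,
    Fintype.card_fin, Finset.powerset_univ] at h
  exact h.symm

lemma sum_bound (n : ℕ) (hn : 2 ≤ n) (A : Finset (Finset (Fin n))) (hA : ∀ S ∈ A, S.Nonempty) :
    ∑ S ∈ A, ((n:ℝ)⁻¹) ^ (3 * S.card) ≤ 3 / n := by
  have hn0 : (0:ℝ) < n := by positivity
  have hinv0 : (0:ℝ) ≤ (n:ℝ)⁻¹ := by positivity
  have hinv1 : (n:ℝ)⁻¹ ≤ 1 := by
    rw [inv_le_one_iff₀]; right; exact_mod_cast Nat.one_le_of_lt hn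
  calc ∑ S ∈ A, ((n:ℝ)⁻¹) ^ (3 * S.card)
      ≤ ∑ S ∈ A, (n:ℝ)⁻¹ * (((n:ℝ)⁻¹ ^ 2)) ^ S.card := by
        apply Finset.sum_le_sum
        intro S hS
        have h1 : 1 ≤ S.card := (hA S hS).card_pos
        have h2 : (3 : ℕ) * S.card = S.card + 2 * S.card := by ring
        rw [h2, pow_add, ← pow_mul]
        apply mul_le_mul_of_nonneg_right _ (by positivity)
        calc ((n:ℝ)⁻¹) ^ S.card ≤ ((n:ℝ)⁻¹) ^ 1 := by
              apply pow_le_pow_of_le_one hinv0 hinv1 h1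
          _ = (n:ℝ)⁻¹ := pow_one _
    _ ≤ ∑ S ∈ (Finset.univ : Finset (Finset (Fin n))), (n:ℝ)⁻¹ * (((n:ℝ)⁻¹ ^ 2)) ^ S.card := by
        apply Finset.sum_le_sum_of_subset_of_nonneg (Finset.subset_univ A)
        intro S _ _
        positivity
    _ = (n:ℝ)⁻¹ * ((n:ℝ)⁻¹ ^ 2 + 1) ^ n := by
        rw [← Finset.mul_sum, sum_pow_card]
    _ ≤ (n:ℝ)⁻¹ * 3 := by
        apply mul_le_mul_of_nonneg_left _ hinv0
        have h1 : (n:ℝ)⁻¹ ^ 2 + 1 ≤ Real.exp ((n:ℝ)⁻¹ ^ 2) := by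
          have := Real.add_one_le_exp ((n:ℝ)⁻¹ ^ 2); linarith
        calc ((n:ℝ)⁻¹ ^ 2 + 1) ^ n ≤ Real.exp ((n:ℝ)⁻¹ ^ 2) ^ n := by
              apply pow_le_pow_left₀ (by positivity) h1
          _ = Real.exp (n * ((n:ℝ)⁻¹ ^ 2)) := by rw [← Real.exp_nat_mul]
          _ = Real.exp ((n:ℝ)⁻¹) := by
              congr 1
              field_simp
          _ ≤ Real.exp 1 := Real.exp_le_exp.mpr hinv1
          _ ≤ 3 := by
              have := Real.exp_one_lt_d9; linarith
    _ = 3 / n := by rw [mul_comm, ← div_eq_mul_inv]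


/-- If `p ≫ ((log n)/n)^{1/2}`, then a.a.s. every subgraph
`H ⊆ G` on at most `100/p` vertices is `10 log n`-degenerate, i.e. every
non-empty induced part of it contains a vertex of degree at most `10 log n`. -/
theorem stmt_8 (p : ℕ → ℝ) (hp : ∀ n, 0 ≤ p n ∧ p n ≤ 1)
    (hgrow : Tendsto (fun n : ℕ => p n / Real.sqrt (Real.log n / n)) atTop atTop) :
    Tendsto (fun n : ℕ => gnp n (p n)
      {ω | ∀ H : (graphOf ω).Subgraph, (H.verts.ncard : ℝ) ≤ 100 / p n →
              ∀ S ⊆ H.verts, S.Nonempty →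
                ∃ v ∈ S, ((H.neighborSet v ∩ S).ncard : ℝ) ≤ 10 * Real.log n})
      atTop (𝓝 1) := by
  classical
  have key : ∀ᶠ n : ℕ in atTop, 1 - ENNReal.ofReal (3 / (n:ℝ)) ≤ gnp n (p n)
      {ω | ∀ H : (graphOf ω).Subgraph, (H.verts.ncard : ℝ) ≤ 100 / p n →
              ∀ S ⊆ H.verts, S.Nonempty →
                ∃ v ∈ S, ((H.neighborSet v ∩ S).ncard : ℝ) ≤ 10 * Real.log n} := by
    have hlog : ∀ᶠ n : ℕ in atTop, 250 ≤ Real.log n :=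
      (Real.tendsto_log_atTop.comp (tendsto_natCast_atTop_atTop (R := ℝ))).eventually_ge_atTop 250
    filter_upwards [hlog, eventually_ge_atTop 2] with n hlogn hn2
    have hq0 : 0 ≤ p n := (hp n).1
    have hq1 : p n ≤ 1 := (hp n).2
    have hlogpos : (0:ℝ) < Real.log n := by linarith
    set q := p n with hq
    set D : ℕ := ⌊10 * Real.log n⌋₊ + 1 with hD
    have hDlog : 10 * Real.log n ≤ (D:ℝ) := by
      have := Nat.lt_floor_add_one (10 * Real.log n)
      push_cast [hD]
      linarith
    set A : Finset (Finset (Fin n)) :=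
      Finset.univ.filter (fun S => S.Nonempty ∧ (S.card:ℝ) ≤ 100 / q) with hA
    set bad : Set (Sym2 (Fin n) → Bool) :=
      ⋃ S ∈ A, {ω | ∀ v ∈ S, D ≤ (((graphOf ω).neighborSet v) ∩ ↑S).ncard} with hbad
    set good : Set (Sym2 (Fin n) → Bool) :=
      {ω | ∀ H : (graphOf ω).Subgraph, (H.verts.ncard : ℝ) ≤ 100 / p n →
              ∀ S ⊆ H.verts, S.Nonempty →
                ∃ v ∈ S, ((H.neighborSet v ∩ S).ncard : ℝ) ≤ 10 * Real.log n} with hgood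
    -- Step I : badᶜ ⊆ good
    have hstepI : badᶜ ⊆ good := by
      intro ω hω
      have hnotbad : ∀ S ∈ A, ¬ (∀ v ∈ S, D ≤ (((graphOf ω).neighborSet v) ∩ ↑S).ncard) := by
        intro S hS hcon
        exact hω (Set.mem_biUnion hS hcon)
      intro H hHcard S hSsub hSne
      have hSfin : S.Finite := Set.toFinite S
      have hS'ne : hSfin.toFinset.Nonempty := by
        obtain ⟨x, hx⟩ := hSne
        exact ⟨x, hSfin.mem_toFinset.mpr hx⟩
      have hS'card : ((hSfin.toFinset.card : ℕ) : ℝ) ≤ 100 / q := by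
        have h1 : hSfin.toFinset.card = S.ncard := (Set.ncard_eq_toFinset_card S hSfin).symm
        have h2 : S.ncard ≤ H.verts.ncard := Set.ncard_le_ncard hSsub (Set.toFinite _)
        rw [h1]
        calc (S.ncard : ℝ) ≤ (H.verts.ncard : ℝ) := by exact_mod_cast h2
          _ ≤ 100 / q := hHcard
      have hS'A : hSfin.toFinset ∈ A := by
        rw [hA, Finset.mem_filter]
        exact ⟨Finset.mem_univ _, hS'ne, hS'card⟩
      have := hnotbad _ hS'A
      push_neg at this
      obtain ⟨v, hv, hlt⟩ := this
      refine ⟨v, hSfin.mem_toFinset.mp hv, ?_⟩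
      have hsub2 : (H.neighborSet v ∩ S) ⊆ ((graphOf ω).neighborSet v ∩ ↑hSfin.toFinset) := by
        rw [hSfin.coe_toFinset]
        exact Set.inter_subset_inter_left _ (H.neighborSet_subset v)
      have hle : (H.neighborSet v ∩ S).ncard
          ≤ (((graphOf ω).neighborSet v) ∩ ↑hSfin.toFinset).ncard :=
        Set.ncard_le_ncard hsub2 (Set.toFinite _)
      have hle2 : (H.neighborSet v ∩ S).ncard ≤ ⌊10 * Real.log n⌋₊ := by omega
      calc ((H.neighborSet v ∩ S).ncard : ℝ) ≤ (⌊10 * Real.log n⌋₊ : ℝ) := by exact_mod_cast hle2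
        _ ≤ 10 * Real.log n := Nat.floor_le (by positivity)
    -- Step II : measure of bad
    have hstepII : gnp n q bad ≤ ENNReal.ofReal (3 / (n:ℝ)) := by
      have hperS : ∀ S ∈ A,
          gnp n q {ω | ∀ v ∈ S, D ≤ (((graphOf ω).neighborSet v) ∩ ↑S).ncard}
            ≤ ENNReal.ofReal (((n:ℝ)⁻¹) ^ (3 * S.card)) := by
        intro S hS
        rw [hA, Finset.mem_filter] at hS
        obtain ⟨-, hSne, hScard⟩ := hS
        have hs1 : 1 ≤ S.card := hSne.card_pos
        have hsp : (S.card : ℝ) * q ≤ 100 := by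
          rcases eq_or_lt_of_le hq0 with heq | hpos
          · rw [← heq]; norm_num
          · exact (le_div_iff₀ hpos).mp hScard
        calc gnp n q {ω | ∀ v ∈ S, D ≤ (((graphOf ω).neighborSet v) ∩ ↑S).ncard}
            ≤ ((S.card ^ 2).choose (S.card * D / 2))
                * ENNReal.ofReal q ^ (S.card * D / 2) := badS_measure hq1 S D
          _ = ENNReal.ofReal (((S.card ^ 2).choose (S.card * D / 2) : ℝ)
                * q ^ (S.card * D / 2)) := by
              rw [ENNReal.ofReal_mul (by positivity), ENNReal.ofReal_pow hq0,
                ENNReal.ofReal_natCast]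
          _ ≤ ENNReal.ofReal (((n:ℝ)⁻¹) ^ (3 * S.card)) := by
              apply ENNReal.ofReal_le_ofReal
              exact real_est n S.card D q hq0 hs1 hsp hlogn hDlog
      calc gnp n q bad
          ≤ ∑ S ∈ A, gnp n q {ω | ∀ v ∈ S, D ≤ (((graphOf ω).neighborSet v) ∩ ↑S).ncard} :=
            measure_biUnion_finset_le _ _
        _ ≤ ∑ S ∈ A, ENNReal.ofReal (((n:ℝ)⁻¹) ^ (3 * S.card)) := Finset.sum_le_sum hperS
        _ = ENNReal.ofReal (∑ S ∈ A, ((n:ℝ)⁻¹) ^ (3 * S.card)) :=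
            (ENNReal.ofReal_sum_of_nonneg (fun S _ => by positivity)).symm
        _ ≤ ENNReal.ofReal (3 / (n:ℝ)) := by
            apply ENNReal.ofReal_le_ofReal
            apply sum_bound n hn2 A
            intro S hS
            exact ((Finset.mem_filter.mp hS).2).1
    -- Step III : conclusion
    have huniv : (1 : ENNReal) ≤ gnp n q bad + gnp n q good := by
      have hsub : (Set.univ : Set (Sym2 (Fin n) → Bool)) ⊆ bad ∪ good := by
        intro ω _
        by_cases hω : ω ∈ bad
        · exact Or.inl hω
        · exact Or.inr (hstepI hω)
      calc (1 : ENNReal) = gnp n q Set.univ := measure_univ.symm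
        _ ≤ gnp n q (bad ∪ good) := measure_mono hsub
        _ ≤ gnp n q bad + gnp n q good := measure_union_le _ _
    calc 1 - ENNReal.ofReal (3 / (n:ℝ)) ≤ 1 - gnp n q bad := tsub_le_tsub_left hstepII 1
      _ ≤ gnp n q good := tsub_le_iff_left.mpr huniv
  have hlow : Tendsto (fun n : ℕ => 1 - ENNReal.ofReal (3 / (n:ℝ))) atTop (𝓝 1) := by
    have h0 : Tendsto (fun n : ℕ => ENNReal.ofReal (3 / (n:ℝ))) atTop (𝓝 0) := by
      have := ENNReal.tendsto_ofReal (tendsto_const_div_atTop_nhds_zero_nat 3)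
      simpa using this
    have := ENNReal.Tendsto.sub (tendsto_const_nhds (x := (1:ENNReal)) (f := atTop)) h0
      (Or.inl (by simp))
    simpa using this
  exact tendsto_of_tendsto_of_tendsto_of_le_of_le' hlow tendsto_const_nhds key
    (Eventually.of_forall (fun n => prob_le_one))

end MonochromaticTrees
end

section
/- Let n ∈ ℕ, let 0 < p ≤ 1, and let G be a graph on n vertices such that for every vertex v and all disjoint subsets U ⊆ V(G) and W ⊆ N_G(v) with |U| ≥ 100/p and |W| ≥ pn/100 one has e_G(U,W) > p|U||W|/2. Then for every vertex v ∈ V(G) and every J ⊆ N_G(v) with |J| ≥ pn/100, at most 100/p vertices x ∈ V(G) \ J satisfy |N_G(x) ∩ J| ≤ p²n/200. -/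
open MeasureTheory Filter Topology SimpleGraph

namespace MonochromaticTrees

variable {V : Type*} {C : Type*}

lemma edgesBetween_le_sum {n : ℕ} (G : SimpleGraph (Fin n)) (U W : Set (Fin n))
    [DecidablePred (· ∈ U)] :
    edgesBetween G U W ≤ ∑ x ∈ U.toFinset, (G.neighborSet x ∩ W).ncard := by
  classical
  set E : Set (Sym2 (Fin n)) := {e ∈ G.edgeSet | ∃ u ∈ U, ∃ w ∈ W, e = s(u, w)} with hE
  set f : Sym2 (Fin n) → Fin n × Fin n := fun e =>
    if h : ∃ u ∈ U, ∃ w ∈ W, e = s(u, w) then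
      (h.choose, h.choose_spec.2.choose) else e.out with hf
  have key : ∀ e ∈ E, (f e).1 ∈ U ∧ (f e).2 ∈ W ∧ e = s((f e).1, (f e).2) := by
    intro e he
    obtain ⟨heG, hex⟩ := he
    simp only [hf, dif_pos hex]
    exact ⟨hex.choose_spec.1, hex.choose_spec.2.choose_spec.1,
      hex.choose_spec.2.choose_spec.2⟩
  set Pf : Finset (Fin n × Fin n) :=
    U.toFinset.biUnion fun x => ((G.neighborSet x ∩ W).toFinset).image fun w => (x, w) with hPf
  have hmaps : ∀ e ∈ E.toFinset, f e ∈ Pf := by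
    intro e he
    rw [Set.mem_toFinset] at he
    obtain ⟨h1, h2, h3⟩ := key e he
    have hadj : G.Adj (f e).1 (f e).2 := by
      rw [← SimpleGraph.mem_edgeSet, ← h3]; exact he.1
    rw [hPf, Finset.mem_biUnion]
    refine ⟨(f e).1, Set.mem_toFinset.2 h1, ?_⟩
    rw [Finset.mem_image]
    exact ⟨(f e).2, Set.mem_toFinset.2 ⟨hadj, h2⟩, rfl⟩
  have hinj : Set.InjOn f E.toFinset := by
    intro e1 h1 e2 h2 heq
    rw [Finset.mem_coe, Set.mem_toFinset] at h1 h2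
    rw [(key e1 h1).2.2, (key e2 h2).2.2, heq]
  have hcard : E.toFinset.card ≤ Pf.card := Finset.card_le_card_of_injOn f hmaps hinj
  have hPfcard : Pf.card = ∑ x ∈ U.toFinset, (G.neighborSet x ∩ W).ncard := by
    rw [hPf, Finset.card_biUnion]
    · refine Finset.sum_congr rfl fun x _ => ?_
      rw [Finset.card_image_of_injective _ (fun a b h => (Prod.mk.injEq _ _ _ _).mp h |>.2), Set.ncard_eq_toFinset_card']
    · intro x _ y _ hxy
      simp only [Finset.disjoint_left, Finset.mem_image]
      rintro ⟨a, b⟩ ⟨w1, _, h1⟩ ⟨w2, _, h2⟩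
      apply hxy
      have e1 := (Prod.mk.injEq _ _ _ _).mp h1 |>.1
      have e2 := (Prod.mk.injEq _ _ _ _).mp h2 |>.1
      rw [e1, e2]
  rw [edgesBetween, Set.ncard_eq_toFinset_card']
  calc _ ≤ Pf.card := hcard
    _ = _ := hPfcard

/-- Deterministic implication: the expansion property of
Lemma 2.1 (ii) implies the covering property of Lemma 2.1 (iii). -/
theorem stmt_9 (n : ℕ) (p : ℝ) (hp0 : 0 < p) (hp1 : p ≤ 1) (G : SimpleGraph (Fin n))
    (hexp : ∀ v : Fin n, ∀ U W : Set (Fin n), Disjoint U W → W ⊆ G.neighborSet v →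
      100 / p ≤ (U.ncard : ℝ) → p * n / 100 ≤ (W.ncard : ℝ) →
      p * U.ncard * W.ncard / 2 < (edgesBetween G U W : ℝ)) :
    ∀ v : Fin n, ∀ J ⊆ G.neighborSet v, p * n / 100 ≤ (J.ncard : ℝ) →
      (({x : Fin n | x ∉ J ∧ ((G.neighborSet x ∩ J).ncard : ℝ) ≤ p ^ 2 * n / 200}).ncard : ℝ)
        ≤ 100 / p := by
  intro v J hJv hJcard
  by_contra hcon
  push_neg at hcon
  classical
  set X := {x : Fin n | x ∉ J ∧ ((G.neighborSet x ∩ J).ncard : ℝ) ≤ p ^ 2 * n / 200} with hX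
  have hdisj : Disjoint X J := Set.disjoint_left.2 fun a ha => ha.1
  have hXcard : 100 / p ≤ (X.ncard : ℝ) := hcon.le
  have hmain := hexp v X J hdisj hJv hXcard hJcard
  have hsum : (edgesBetween G X J : ℝ) ≤ ∑ x ∈ X.toFinset, ((G.neighborSet x ∩ J).ncard : ℝ) := by
    have h := edgesBetween_le_sum G X J
    calc (edgesBetween G X J : ℝ)
        ≤ ((∑ x ∈ X.toFinset, (G.neighborSet x ∩ J).ncard : ℕ) : ℝ) := by exact_mod_cast h
      _ = _ := by push_cast; rfl
  have hsum2 : ∑ x ∈ X.toFinset, ((G.neighborSet x ∩ J).ncard : ℝ)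
      ≤ (X.toFinset.card : ℝ) * (p ^ 2 * n / 200) := by
    have := Finset.sum_le_card_nsmul X.toFinset
      (fun x => ((G.neighborSet x ∩ J).ncard : ℝ)) (p ^ 2 * n / 200)
      (fun x hx => (Set.mem_toFinset.mp hx).2)
    simpa [nsmul_eq_mul] using this
  have hXc : (X.toFinset.card : ℝ) = (X.ncard : ℝ) := by
    rw [Set.ncard_eq_toFinset_card']
  rw [hXc] at hsum2
  have hkey : (X.ncard : ℝ) * (p ^ 2 * n / 200) ≤ p * X.ncard * J.ncard / 2 := by
    nlinarith [mul_le_mul_of_nonneg_left hJcard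
      (show (0:ℝ) ≤ p * (X.ncard : ℝ) / 2 by positivity)]
  linarith

end MonochromaticTrees
end
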